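/- arXiv:1110.3211 — 4 statements merged into one kernel-verified Lean document; each statement's English description precedes it below -/
import Mathlib

section
/- Consider the one-sided Tron game on a path P_n: Alice picks a start vertex and makes two moves before Bob joins; thereafter they alternate. Under optimal play the ratio (Bob's score)/(Alice's score) is Theta(sqrt(n)): it is at least c1*sqrt(n) and at most c2*sqrt(n) for absolute constants c1, c2 > 0 and all sufficiently large n. -/
/-- A state of the Tron game: positions of the two players, the set of
vertices visited so far by either player, and the two scores. -/
structure TronState (V : Type) where
  posA : V
  posB : V
  visited : Finset V
  scoreA : ℕ
  scoreB : ℕ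

/-- A player at `p` is stuck if every vertex it could move to is visited. -/
def TronStuck {V : Type} (R : V → V → Prop) (p : V) (vis : Finset V) : Prop :=
  ∀ w, R p w → w ∈ vis

open Classical in
/-- Bob (second player) can force predicate `P` of the two final scores
(Alice's, Bob's), playing on the (possibly directed) edge relation `R`;
`turn = true` means Alice moves next.  A stuck player passes; the game ends
when both players are stuck. -/
def tronForceB {V : Type} [DecidableEq V] (R : V → V → Prop) (P : ℕ → ℕ → Prop) :
    ℕ → Bool → TronState V → Prop
  | 0, _, s => P s.scoreA s.scoreB
  | f + 1, true, s =>
      if TronStuck R s.posA s.visited then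
        if TronStuck R s.posB s.visited then P s.scoreA s.scoreB
        else tronForceB R P f false s
      else
        ∀ w, R s.posA w → w ∉ s.visited →
          tronForceB R P f false ⟨w, s.posB, insert w s.visited, s.scoreA + 1, s.scoreB⟩
  | f + 1, false, s =>
      if TronStuck R s.posB s.visited then
        if TronStuck R s.posA s.visited then P s.scoreA s.scoreB
        else tronForceB R P f true s
      else
        ∃ w, R s.posB w ∧ w ∉ s.visited ∧
          tronForceB R P f true ⟨s.posA, w, insert w s.visited, s.scoreA, s.scoreB + 1⟩

open Classical in
/-- Alice (first player) can force predicate `P` of the final scores. -/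
def tronForceA {V : Type} [DecidableEq V] (R : V → V → Prop) (P : ℕ → ℕ → Prop) :
    ℕ → Bool → TronState V → Prop
  | 0, _, s => P s.scoreA s.scoreB
  | f + 1, true, s =>
      if TronStuck R s.posA s.visited then
        if TronStuck R s.posB s.visited then P s.scoreA s.scoreB
        else tronForceA R P f false s
      else
        ∃ w, R s.posA w ∧ w ∉ s.visited ∧
          tronForceA R P f false ⟨w, s.posB, insert w s.visited, s.scoreA + 1, s.scoreB⟩
  | f + 1, false, s =>
      if TronStuck R s.posB s.visited then
        if TronStuck R s.posA s.visited then P s.scoreA s.scoreB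
        else tronForceA R P f true s
      else
        ∀ w, R s.posB w → w ∉ s.visited →
          tronForceA R P f true ⟨s.posA, w, insert w s.visited, s.scoreA, s.scoreB + 1⟩

open Classical in
/-- Every complete play of the game satisfies `P` of the final scores. -/
def tronInevitable {V : Type} [DecidableEq V] (R : V → V → Prop) (P : ℕ → ℕ → Prop) :
    ℕ → Bool → TronState V → Prop
  | 0, _, s => P s.scoreA s.scoreB
  | f + 1, true, s =>
      if TronStuck R s.posA s.visited then
        if TronStuck R s.posB s.visited then P s.scoreA s.scoreB
        else tronInevitable R P f false s
      else
        ∀ w, R s.posA w → w ∉ s.visited →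
          tronInevitable R P f false ⟨w, s.posB, insert w s.visited, s.scoreA + 1, s.scoreB⟩
  | f + 1, false, s =>
      if TronStuck R s.posB s.visited then
        if TronStuck R s.posA s.visited then P s.scoreA s.scoreB
        else tronInevitable R P f true s
      else
        ∀ w, R s.posB w → w ∉ s.visited →
          tronInevitable R P f true ⟨s.posA, w, insert w s.visited, s.scoreA, s.scoreB + 1⟩

/-- The initial state once Alice has started at `v` and Bob at `w`:
both vertices are visited, both scores are `1`, and Alice moves first. -/
def tronInit {V : Type} [DecidableEq V] (v w : V) : TronState V :=
  ⟨v, w, {v, w}, 1, 1⟩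

/-- Enough fuel for any Tron game on `V` to finish. -/
def tronFuel (V : Type) [Fintype V] : ℕ := 2 * Fintype.card V + 2

/-- In the Tron game on `G` (Alice picks a start vertex, then Bob picks a
different one, then they alternate, Alice first), Bob can force `P`. -/
def bobCanForce {V : Type} [Fintype V] [DecidableEq V] (G : SimpleGraph V)
    (P : ℕ → ℕ → Prop) : Prop :=
  ∀ v : V, ∃ w, w ≠ v ∧ tronForceB G.Adj P (tronFuel V) true (tronInit v w)

/-- In the Tron game on `G`, Alice can force `P`. -/
def aliceCanForce {V : Type} [Fintype V] [DecidableEq V] (G : SimpleGraph V)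
    (P : ℕ → ℕ → Prop) : Prop :=
  ∃ v : V, ∀ w, w ≠ v → tronForceA G.Adj P (tronFuel V) true (tronInit v w)

/-- The path graph on `Fin n`. -/
def pathG (n : ℕ) : SimpleGraph (Fin n) :=
  SimpleGraph.fromRel (fun x y => x.val + 1 = y.val)

section Tron
variable {n : ℕ}

lemma pathAdj {a b : Fin n} : (pathG n).Adj a b ↔ (a.val + 1 = b.val ∨ b.val + 1 = a.val) := by
  constructor
  · rintro ⟨h1, h2 | h2⟩
    · exact Or.inl h2
    · exact Or.inr h2
  · intro h
    exact ⟨by rintro rfl; omega, h⟩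

lemma notStuck {R : Fin n → Fin n → Prop} {p w : Fin n} {vis : Finset (Fin n)}
    (h : R p w) (hw : w ∉ vis) : ¬ TronStuck R p vis := fun hs => hw (hs w h)

lemma stuck_mono {R : Fin n → Fin n → Prop} {p : Fin n} {v v' : Finset (Fin n)}
    (h : v ⊆ v') (hs : TronStuck R p v) : TronStuck R p v' := fun w hw => h (hs w hw)

/-- Bob walks left to 0 while Alice is stuck. -/
lemma walkLeft (P : ℕ → ℕ → Prop) :
    ∀ f (s : TronState (Fin n)),
      TronStuck (pathG n).Adj s.posA s.visited →
      (∀ i : Fin n, i.val < s.posB.val → i ∉ s.visited) →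
      (∀ i : Fin n, i.val = s.posB.val + 1 → i ∈ s.visited) →
      s.posB ∈ s.visited →
      2 * s.posB.val + 1 ≤ f →
      P s.scoreA (s.scoreB + s.posB.val) →
      tronForceB (pathG n).Adj P f false s := by
  intro f
  induction f using Nat.strong_induction_on with
  | _ f IH =>
  intro s hA hfree hup hmem hf hP
  obtain ⟨f, rfl⟩ : ∃ f', f = f' + 1 := ⟨f - 1, by omega⟩
  rw [tronForceB]
  by_cases hb0 : s.posB.val = 0
  · have hstuckB : TronStuck (pathG n).Adj s.posB s.visited := by
      intro w hw
      rcases pathAdj.mp hw with h | h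
      · exact hup w h.symm
      · omega
    rw [if_pos hstuckB, if_pos hA]
    simpa [hb0] using hP
  · have hlt : s.posB.val - 1 < n := by omega
    set w0 : Fin n := ⟨s.posB.val - 1, hlt⟩ with hw0def
    have hadj : (pathG n).Adj s.posB w0 := pathAdj.mpr (Or.inr (by simp [hw0def]; omega))
    have hw0 : w0 ∉ s.visited := hfree w0 (by simp [hw0def]; omega)
    rw [if_neg (notStuck hadj hw0)]
    refine ⟨w0, hadj, hw0, ?_⟩
    obtain ⟨f, rfl⟩ : ∃ f', f = f' + 1 := ⟨f - 1, by omega⟩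
    rw [tronForceB]
    dsimp only
    have hA' : TronStuck (pathG n).Adj s.posA (insert w0 s.visited) :=
      stuck_mono (Finset.subset_insert _ _) hA
    rw [if_pos hA']
    have hw0v : w0.val = s.posB.val - 1 := rfl
    by_cases hb1 : w0.val = 0
    · have hstuckB' : TronStuck (pathG n).Adj w0 (insert w0 s.visited) := by
        intro w hw
        rcases pathAdj.mp hw with h | h
        · have : w = s.posB := Fin.ext (by omega)
          exact this ▸ Finset.mem_insert_of_mem hmem
        · omega
      rw [if_pos hstuckB']
      have h1 : s.posB.val = 1 := by omega
      rw [h1] at hP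
      exact hP
    · have hlt2 : w0.val - 1 < n := by omega
      have hadj2 : (pathG n).Adj w0 ⟨w0.val - 1, hlt2⟩ := pathAdj.mpr (Or.inr (by
        simp only [Fin.val_mk]; omega))
      have hnm2 : (⟨w0.val - 1, hlt2⟩ : Fin n) ∉ insert w0 s.visited := by
        simp only [Finset.mem_insert]
        push_neg
        refine ⟨fun h => ?_, hfree _ (by simp only [Fin.val_mk, hw0v]; omega)⟩
        have := congrArg Fin.val h
        simp only [Fin.val_mk] at this
        omega
      rw [if_neg (notStuck hadj2 hnm2)]
      apply IH f (by omega)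
      · exact hA'
      · intro i hi
        simp only [Finset.mem_insert] at *
        push_neg
        try simp only [Fin.val_mk, hw0v] at hi
        refine ⟨fun h => ?_, hfree i (by omega)⟩
        have := congrArg Fin.val h
        omega
      · intro i hi
        try simp only [Fin.val_mk, hw0v] at hi
        have : i = s.posB := Fin.ext (by omega)
        exact this ▸ Finset.mem_insert_of_mem hmem
      · exact Finset.mem_insert_self _ _
      · simp only [Fin.val_mk, hw0v]; omega
      · have : s.scoreB + 1 + w0.val = s.scoreB + s.posB.val := by omega
        rw [this]
        exact hP

/-- Bob walks right to n-1 while Alice is stuck. -/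
lemma walkRight (P : ℕ → ℕ → Prop) :
    ∀ f (s : TronState (Fin n)),
      TronStuck (pathG n).Adj s.posA s.visited →
      (∀ i : Fin n, s.posB.val < i.val → i ∉ s.visited) →
      (∀ i : Fin n, i.val + 1 = s.posB.val → i ∈ s.visited) →
      s.posB ∈ s.visited →
      2 * (n - 1 - s.posB.val) + 1 ≤ f →
      P s.scoreA (s.scoreB + (n - 1 - s.posB.val)) →
      tronForceB (pathG n).Adj P f false s := by
  intro f
  induction f using Nat.strong_induction_on with
  | _ f IH =>
  intro s hA hfree hdown hmem hf hP
  have hsn : s.posB.val < n := s.posB.isLt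
  obtain ⟨f, rfl⟩ : ∃ f', f = f' + 1 := ⟨f - 1, by omega⟩
  rw [tronForceB]
  by_cases hb0 : s.posB.val = n - 1
  · have hstuckB : TronStuck (pathG n).Adj s.posB s.visited := by
      intro w hw
      rcases pathAdj.mp hw with h | h
      · have := w.isLt; omega
      · exact hdown w h
    rw [if_pos hstuckB, if_pos hA]
    have h0 : n - 1 - s.posB.val = 0 := by omega
    rw [h0] at hP
    exact hP
  · have hlt : s.posB.val + 1 < n := by omega
    set w0 : Fin n := ⟨s.posB.val + 1, hlt⟩ with hw0def
    have hw0v : w0.val = s.posB.val + 1 := rfl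
    have hadj : (pathG n).Adj s.posB w0 := pathAdj.mpr (Or.inl rfl)
    have hw0 : w0 ∉ s.visited := hfree w0 (by omega)
    rw [if_neg (notStuck hadj hw0)]
    refine ⟨w0, hadj, hw0, ?_⟩
    obtain ⟨f, rfl⟩ : ∃ f', f = f' + 1 := ⟨f - 1, by omega⟩
    rw [tronForceB]
    dsimp only
    have hA' : TronStuck (pathG n).Adj s.posA (insert w0 s.visited) :=
      stuck_mono (Finset.subset_insert _ _) hA
    rw [if_pos hA']
    by_cases hb1 : w0.val = n - 1
    · have hstuckB' : TronStuck (pathG n).Adj w0 (insert w0 s.visited) := by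
        intro w hw
        rcases pathAdj.mp hw with h | h
        · have := w.isLt; omega
        · have : w = s.posB := Fin.ext (by omega)
          exact this ▸ Finset.mem_insert_of_mem hmem
      rw [if_pos hstuckB']
      have h1 : n - 1 - s.posB.val = 1 := by omega
      rw [h1] at hP
      exact hP
    · have hlt2 : w0.val + 1 < n := by omega
      have hadj2 : (pathG n).Adj w0 ⟨w0.val + 1, hlt2⟩ := pathAdj.mpr (Or.inl rfl)
      have hnm2 : (⟨w0.val + 1, hlt2⟩ : Fin n) ∉ insert w0 s.visited := by
        simp only [Finset.mem_insert]
        push_neg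
        refine ⟨fun h => ?_, hfree _ (by simp only [Fin.val_mk, hw0v]; omega)⟩
        have := congrArg Fin.val h
        simp only [Fin.val_mk] at this
        omega
      rw [if_neg (notStuck hadj2 hnm2)]
      apply IH f (by omega)
      · exact hA'
      · intro i hi
        try simp only [Fin.val_mk, hw0v] at hi
        simp only [Finset.mem_insert]
        push_neg
        refine ⟨fun h => ?_, hfree i (by omega)⟩
        have := congrArg Fin.val h
        omega
      · intro i hi
        try simp only [Fin.val_mk, hw0v] at hi
        have : i = s.posB := Fin.ext (by omega)
        exact this ▸ Finset.mem_insert_of_mem hmem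
      · exact Finset.mem_insert_self _ _
      · simp only [Fin.val_mk, hw0v]; omega
      · have : s.scoreB + 1 + (n - 1 - w0.val) = s.scoreB + (n - 1 - s.posB.val) := by
          simp only [hw0v]; omega
        rw [this]
        exact hP

/-- Alice walks left to 0 and Bob walks right to n-1; Alice's turn. -/
lemma bothWalk (P : ℕ → ℕ → Prop) :
    ∀ f (s : TronState (Fin n)),
      s.posA.val < s.posB.val →
      (∀ i : Fin n, i.val < s.posA.val → i ∉ s.visited) →
      (∀ i : Fin n, i.val = s.posA.val + 1 → i ∈ s.visited) →
      s.posA ∈ s.visited →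
      (∀ i : Fin n, s.posB.val < i.val → i ∉ s.visited) →
      (∀ i : Fin n, i.val + 1 = s.posB.val → i ∈ s.visited) →
      s.posB ∈ s.visited →
      2 * (s.posA.val + (n - 1 - s.posB.val)) + 2 ≤ f →
      P (s.scoreA + s.posA.val) (s.scoreB + (n - 1 - s.posB.val)) →
      tronForceB (pathG n).Adj P f true s := by
  intro f
  induction f using Nat.strong_induction_on with
  | _ f IH =>
  intro s hord hAfree hAback hmemA hBfree hBback hmemB hf hP
  have hbn : s.posB.val < n := s.posB.isLt
  obtain ⟨f1, rfl⟩ : ∃ f1, f = f1 + 1 := ⟨f - 1, by omega⟩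
  rw [tronForceB]
  by_cases ha0 : s.posA.val = 0
  · have hstuckA : TronStuck (pathG n).Adj s.posA s.visited := by
      intro w hw
      rcases pathAdj.mp hw with h | h
      · exact hAback w (by omega)
      · omega
    rw [if_pos hstuckA]
    by_cases hb1 : s.posB.val = n - 1
    · have hstuckB : TronStuck (pathG n).Adj s.posB s.visited := by
        intro w hw
        rcases pathAdj.mp hw with h | h
        · have := w.isLt; omega
        · exact hBback w h
      rw [if_pos hstuckB]
      have e1 : s.posA.val = 0 := ha0
      have e2 : n - 1 - s.posB.val = 0 := by omega
      rw [e1, e2] at hP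
      simpa using hP
    · have hlt : s.posB.val + 1 < n := by omega
      have hadj : (pathG n).Adj s.posB ⟨s.posB.val + 1, hlt⟩ := pathAdj.mpr (Or.inl rfl)
      have hnm : (⟨s.posB.val + 1, hlt⟩ : Fin n) ∉ s.visited := hBfree _ (by simp only [Fin.val_mk]; omega)
      rw [if_neg (notStuck hadj hnm)]
      apply walkRight P f1 s hstuckA hBfree hBback hmemB (by omega)
      rw [ha0] at hP
      simpa using hP
  · -- Alice moves
    have hlt : s.posA.val - 1 < n := by omega
    have hadjA : (pathG n).Adj s.posA ⟨s.posA.val - 1, hlt⟩ :=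
      pathAdj.mpr (Or.inr (by simp only [Fin.val_mk]; omega))
    have hnmA : (⟨s.posA.val - 1, hlt⟩ : Fin n) ∉ s.visited :=
      hAfree _ (by simp only [Fin.val_mk]; omega)
    rw [if_neg (notStuck hadjA hnmA)]
    intro w hadj hwv
    have hwval : w.val + 1 = s.posA.val := by
      rcases pathAdj.mp hadj with h | h
      · exact absurd (hAback w h.symm) hwv
      · exact h
    obtain ⟨f2, rfl⟩ : ∃ f2, f1 = f2 + 1 := ⟨f1 - 1, by omega⟩
    rw [tronForceB]
    dsimp only
    have hmemA' : s.posA ∈ insert w s.visited := Finset.mem_insert_of_mem hmemA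
    have hmemB' : s.posB ∈ insert w s.visited := Finset.mem_insert_of_mem hmemB
    by_cases hb1 : s.posB.val = n - 1
    · have hstuckB : TronStuck (pathG n).Adj s.posB (insert w s.visited) := by
        intro u hu
        rcases pathAdj.mp hu with h | h
        · have := u.isLt; omega
        · exact Finset.mem_insert_of_mem (hBback u h)
      rw [if_pos hstuckB]
      by_cases hw0 : w.val = 0
      · have hstuckA' : TronStuck (pathG n).Adj w (insert w s.visited) := by
          intro u hu
          rcases pathAdj.mp hu with h | h
          · have : u = s.posA := Fin.ext (by omega)
            exact this ▸ hmemA'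
          · omega
        rw [if_pos hstuckA']
        have e1 : s.posA.val = 1 := by omega
        have e2 : n - 1 - s.posB.val = 0 := by omega
        rw [e1, e2] at hP
        simpa using hP
      · have hlt2 : w.val - 1 < n := by omega
        have hadj2 : (pathG n).Adj w ⟨w.val - 1, hlt2⟩ :=
          pathAdj.mpr (Or.inr (by simp only [Fin.val_mk]; omega))
        have hnm2 : (⟨w.val - 1, hlt2⟩ : Fin n) ∉ insert w s.visited := by
          simp only [Finset.mem_insert]
          push_neg
          refine ⟨fun h => ?_, hAfree _ (by simp only [Fin.val_mk]; omega)⟩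
          have := congrArg Fin.val h
          simp only [Fin.val_mk] at this
          omega
        rw [if_neg (notStuck hadj2 hnm2)]
        apply IH f2 (by omega)
        · dsimp only; omega
        · dsimp only
          intro i hi
          simp only [Finset.mem_insert]
          push_neg
          exact ⟨fun h => by rw [h] at hi; omega, hAfree i (by omega)⟩
        · dsimp only
          intro i hi
          have : i = s.posA := Fin.ext (by omega)
          exact this ▸ hmemA'
        · exact Finset.mem_insert_self _ _
        · dsimp only
          intro i hi
          simp only [Finset.mem_insert]
          push_neg
          exact ⟨fun h => by rw [h] at hi; omega, hBfree i hi⟩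
        · dsimp only
          intro i hi
          exact Finset.mem_insert_of_mem (hBback i hi)
        · exact hmemB'
        · dsimp only; omega
        · dsimp only
          have : s.scoreA + 1 + w.val = s.scoreA + s.posA.val := by omega
          rw [this]
          exact hP
    · -- Bob moves right
      have hltB : s.posB.val + 1 < n := by omega
      have hadjB : (pathG n).Adj s.posB ⟨s.posB.val + 1, hltB⟩ := pathAdj.mpr (Or.inl rfl)
      have hnmB : (⟨s.posB.val + 1, hltB⟩ : Fin n) ∉ insert w s.visited := by
        simp only [Finset.mem_insert]
        push_neg
        refine ⟨fun h => ?_, hBfree _ (by simp only [Fin.val_mk]; omega)⟩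
        have := congrArg Fin.val h
        simp only [Fin.val_mk] at this
        omega
      rw [if_neg (notStuck hadjB hnmB)]
      refine ⟨⟨s.posB.val + 1, hltB⟩, hadjB, hnmB, ?_⟩
      apply IH f2 (by omega)
      · dsimp only [Fin.val_mk]; omega
      · dsimp only
        intro i hi
        simp only [Finset.mem_insert]
        push_neg
        refine ⟨fun h => by rw [h] at hi; simp only [Fin.val_mk] at hi; omega,
          fun h => by rw [h] at hi; omega, hAfree i (by omega)⟩
      · dsimp only
        intro i hi
        have : i = s.posA := Fin.ext (by omega)
        rw [this]
        exact Finset.mem_insert_of_mem hmemA'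
      · exact Finset.mem_insert_of_mem (Finset.mem_insert_self _ _)
      · dsimp only
        intro i hi
        try simp only [Fin.val_mk] at hi
        simp only [Finset.mem_insert]
        push_neg
        refine ⟨fun h => by rw [h] at hi; simp only [Fin.val_mk] at hi; omega,
          fun h => by rw [h] at hi; omega, hBfree i (by omega)⟩
      · dsimp only
        intro i hi
        try simp only [Fin.val_mk] at hi
        have : i = s.posB := Fin.ext (by omega)
        rw [this]
        exact Finset.mem_insert_of_mem hmemB'
      · exact Finset.mem_insert_self _ _
      · dsimp only [Fin.val_mk]; omega
      · dsimp only [Fin.val_mk]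
        have e1 : s.scoreA + 1 + w.val = s.scoreA + s.posA.val := by omega
        have e2 : s.scoreB + 1 + (n - 1 - (s.posB.val + 1)) = s.scoreB + (n - 1 - s.posB.val) := by
          omega
        rw [e1, e2]
        exact hP

/-- Alice walks right to n-1 and Bob walks left to 0; Alice's turn. -/
lemma bothWalkR (P : ℕ → ℕ → Prop) :
    ∀ f (s : TronState (Fin n)),
      s.posB.val < s.posA.val →
      (∀ i : Fin n, s.posA.val < i.val → i ∉ s.visited) →
      (∀ i : Fin n, i.val + 1 = s.posA.val → i ∈ s.visited) →
      s.posA ∈ s.visited →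
      (∀ i : Fin n, i.val < s.posB.val → i ∉ s.visited) →
      (∀ i : Fin n, i.val = s.posB.val + 1 → i ∈ s.visited) →
      s.posB ∈ s.visited →
      2 * ((n - 1 - s.posA.val) + s.posB.val) + 2 ≤ f →
      P (s.scoreA + (n - 1 - s.posA.val)) (s.scoreB + s.posB.val) →
      tronForceB (pathG n).Adj P f true s := by
  intro f
  induction f using Nat.strong_induction_on with
  | _ f IH =>
  intro s hord hAfree hAback hmemA hBfree hBback hmemB hf hP
  have han : s.posA.val < n := s.posA.isLt
  obtain ⟨f1, rfl⟩ : ∃ f1, f = f1 + 1 := ⟨f - 1, by omega⟩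
  rw [tronForceB]
  by_cases ha0 : s.posA.val = n - 1
  · have hstuckA : TronStuck (pathG n).Adj s.posA s.visited := by
      intro w hw
      rcases pathAdj.mp hw with h | h
      · have := w.isLt; omega
      · exact hAback w h
    rw [if_pos hstuckA]
    by_cases hb1 : s.posB.val = 0
    · have hstuckB : TronStuck (pathG n).Adj s.posB s.visited := by
        intro w hw
        rcases pathAdj.mp hw with h | h
        · exact hBback w (by omega)
        · omega
      rw [if_pos hstuckB]
      have e1 : n - 1 - s.posA.val = 0 := by omega
      rw [e1, hb1] at hP
      simpa using hP
    · have hlt : s.posB.val - 1 < n := by omega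
      have hadj : (pathG n).Adj s.posB ⟨s.posB.val - 1, hlt⟩ :=
        pathAdj.mpr (Or.inr (by simp only [Fin.val_mk]; omega))
      have hnm : (⟨s.posB.val - 1, hlt⟩ : Fin n) ∉ s.visited :=
        hBfree _ (by simp only [Fin.val_mk]; omega)
      rw [if_neg (notStuck hadj hnm)]
      apply walkLeft P f1 s hstuckA hBfree hBback hmemB (by omega)
      have e1 : n - 1 - s.posA.val = 0 := by omega
      rw [e1] at hP
      simpa using hP
  · -- Alice moves right
    have hlt : s.posA.val + 1 < n := by omega
    have hadjA : (pathG n).Adj s.posA ⟨s.posA.val + 1, hlt⟩ := pathAdj.mpr (Or.inl rfl)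
    have hnmA : (⟨s.posA.val + 1, hlt⟩ : Fin n) ∉ s.visited :=
      hAfree _ (by simp only [Fin.val_mk]; omega)
    rw [if_neg (notStuck hadjA hnmA)]
    intro w hadj hwv
    have hwval : w.val = s.posA.val + 1 := by
      rcases pathAdj.mp hadj with h | h
      · omega
      · exact absurd (hAback w h) hwv
    obtain ⟨f2, rfl⟩ : ∃ f2, f1 = f2 + 1 := ⟨f1 - 1, by omega⟩
    rw [tronForceB]
    dsimp only
    have hmemA' : s.posA ∈ insert w s.visited := Finset.mem_insert_of_mem hmemA
    have hmemB' : s.posB ∈ insert w s.visited := Finset.mem_insert_of_mem hmemB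
    by_cases hb1 : s.posB.val = 0
    · have hstuckB : TronStuck (pathG n).Adj s.posB (insert w s.visited) := by
        intro u hu
        rcases pathAdj.mp hu with h | h
        · exact Finset.mem_insert_of_mem (hBback u (by omega))
        · omega
      rw [if_pos hstuckB]
      by_cases hw0 : w.val = n - 1
      · have hstuckA' : TronStuck (pathG n).Adj w (insert w s.visited) := by
          intro u hu
          rcases pathAdj.mp hu with h | h
          · have := u.isLt; omega
          · have : u = s.posA := Fin.ext (by omega)
            exact this ▸ hmemA'
        rw [if_pos hstuckA']
        have e1 : n - 1 - s.posA.val = 1 := by omega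
        rw [e1, hb1] at hP
        simpa using hP
      · have hlt2 : w.val + 1 < n := by omega
        have hadj2 : (pathG n).Adj w ⟨w.val + 1, hlt2⟩ := pathAdj.mpr (Or.inl rfl)
        have hnm2 : (⟨w.val + 1, hlt2⟩ : Fin n) ∉ insert w s.visited := by
          simp only [Finset.mem_insert]
          push_neg
          refine ⟨fun h => ?_, hAfree _ (by simp only [Fin.val_mk]; omega)⟩
          have := congrArg Fin.val h
          simp only [Fin.val_mk] at this
          omega
        rw [if_neg (notStuck hadj2 hnm2)]
        apply IH f2 (by omega)
        · dsimp only; omega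
        · dsimp only
          intro i hi
          simp only [Finset.mem_insert]
          push_neg
          exact ⟨fun h => by rw [h] at hi; omega, hAfree i (by omega)⟩
        · dsimp only
          intro i hi
          have : i = s.posA := Fin.ext (by omega)
          exact this ▸ hmemA'
        · exact Finset.mem_insert_self _ _
        · dsimp only
          intro i hi
          simp only [Finset.mem_insert]
          push_neg
          exact ⟨fun h => by rw [h] at hi; omega, hBfree i hi⟩
        · dsimp only
          intro i hi
          exact Finset.mem_insert_of_mem (hBback i hi)
        · exact hmemB'
        · dsimp only; omega
        · dsimp only
          have : s.scoreA + 1 + (n - 1 - w.val) = s.scoreA + (n - 1 - s.posA.val) := by omega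
          rw [this]
          exact hP
    · -- Bob moves left
      have hltB : s.posB.val - 1 < n := by omega
      have hadjB : (pathG n).Adj s.posB ⟨s.posB.val - 1, hltB⟩ :=
        pathAdj.mpr (Or.inr (by simp only [Fin.val_mk]; omega))
      have hnmB : (⟨s.posB.val - 1, hltB⟩ : Fin n) ∉ insert w s.visited := by
        simp only [Finset.mem_insert]
        push_neg
        refine ⟨fun h => ?_, hBfree _ (by simp only [Fin.val_mk]; omega)⟩
        have := congrArg Fin.val h
        simp only [Fin.val_mk] at this
        omega
      rw [if_neg (notStuck hadjB hnmB)]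
      refine ⟨⟨s.posB.val - 1, hltB⟩, hadjB, hnmB, ?_⟩
      apply IH f2 (by omega)
      · dsimp only [Fin.val_mk]; omega
      · dsimp only
        intro i hi
        simp only [Finset.mem_insert]
        push_neg
        refine ⟨fun h => by rw [h] at hi; simp only [Fin.val_mk] at hi; omega,
          fun h => by rw [h] at hi; omega, hAfree i (by omega)⟩
      · dsimp only
        intro i hi
        have : i = s.posA := Fin.ext (by omega)
        rw [this]
        exact Finset.mem_insert_of_mem hmemA'
      · exact Finset.mem_insert_of_mem (Finset.mem_insert_self _ _)
      · dsimp only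
        intro i hi
        try simp only [Fin.val_mk] at hi
        simp only [Finset.mem_insert]
        push_neg
        refine ⟨fun h => by rw [h] at hi; simp only [Fin.val_mk] at hi; omega,
          fun h => by rw [h] at hi; omega, hBfree i (by omega)⟩
      · dsimp only
        intro i hi
        try simp only [Fin.val_mk] at hi
        have : i = s.posB := Fin.ext (by omega)
        rw [this]
        exact Finset.mem_insert_of_mem hmemB'
      · exact Finset.mem_insert_self _ _
      · dsimp only [Fin.val_mk]; omega
      · dsimp only [Fin.val_mk]
        have e1 : s.scoreA + 1 + (n - 1 - w.val) = s.scoreA + (n - 1 - s.posA.val) := by omega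
        have e2 : s.scoreB + 1 + (s.posB.val - 1) = s.scoreB + s.posB.val := by omega
        rw [e1, e2]
        exact hP

lemma card_le_n (v : Finset (Fin n)) : v.card ≤ n := by
  simpa using Finset.card_le_univ v

/-- Upper bound, Bob starts left of Alice's block: his score stays ≤ m. -/
lemma ubLeft {m : ℕ} (P : ℕ → ℕ → Prop) (hm2 : m + 2 < n)
    (hP : ∀ a b, 3 ≤ a → b ≤ m → P a b) :
    ∀ f (turn : Bool) (s : TronState (Fin n)),
      s.posA.val ≤ m →
      s.posA ∈ s.visited →
      (∀ i : Fin n, i.val = s.posA.val + 1 → i ∈ s.visited) →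
      s.posB.val < m →
      (∀ i : Fin n, i.val = m → i ∈ s.visited) →
      (∀ i ∈ s.visited, i.val ≤ m + 2) →
      s.scoreA + s.scoreB ≤ s.visited.card →
      3 ≤ s.scoreA →
      tronForceA (pathG n).Adj P f turn s := by
  intro f
  induction f using Nat.strong_induction_on with
  | _ f IH =>
  intro turn s hAm hmemA hAback hBm hblock hreg hsum h3
  have hcard : s.visited.card ≤ m + 3 := by
    have hsub : s.visited ⊆ Finset.attachFin (Finset.range (m + 3))
        (fun x hx => by rw [Finset.mem_range] at hx; omega) := by
      intro i hi
      rw [Finset.mem_attachFin, Finset.mem_range]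
      have := hreg i hi
      omega
    calc s.visited.card ≤ _ := Finset.card_le_card hsub
    _ = m + 3 := by rw [Finset.card_attachFin, Finset.card_range]
  have hPnow : P s.scoreA s.scoreB := hP _ _ h3 (by omega)
  obtain ⟨f, rfl⟩ | rfl : (∃ f', f = f' + 1) ∨ f = 0 := by
    rcases f with _ | f
    · exact Or.inr rfl
    · exact Or.inl ⟨f, rfl⟩
  swap
  · rw [tronForceA]; exact hPnow
  cases turn
  · -- Bob's turn
    rw [tronForceA]
    by_cases hSB : TronStuck (pathG n).Adj s.posB s.visited
    · rw [if_pos hSB]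
      by_cases hSA : TronStuck (pathG n).Adj s.posA s.visited
      · rw [if_pos hSA]; exact hPnow
      · rw [if_neg hSA]
        exact IH f (by omega) true s hAm hmemA hAback hBm hblock hreg hsum h3
    · rw [if_neg hSB]
      intro w hadj hwv
      have hwm : w.val < m := by
        rcases pathAdj.mp hadj with h | h
        · by_contra hge
          have hwem : w.val = m := by omega
          exact hwv (hblock w hwem)
        · omega
      apply IH f (by omega) true ⟨s.posA, w, insert w s.visited, s.scoreA, s.scoreB + 1⟩
      · exact hAm
      · exact Finset.mem_insert_of_mem hmemA
      · exact fun i hi => Finset.mem_insert_of_mem (hAback i hi)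
      · exact hwm
      · exact fun i hi => Finset.mem_insert_of_mem (hblock i hi)
      · intro i hi
        rcases Finset.mem_insert.mp hi with rfl | hi
        · omega
        · exact hreg i hi
      · dsimp only
        rw [Finset.card_insert_of_notMem hwv]
        omega
      · exact h3
  · -- Alice's turn
    rw [tronForceA]
    by_cases hSA : TronStuck (pathG n).Adj s.posA s.visited
    · rw [if_pos hSA]
      by_cases hSB : TronStuck (pathG n).Adj s.posB s.visited
      · rw [if_pos hSB]; exact hPnow
      · rw [if_neg hSB]
        exact IH f (by omega) false s hAm hmemA hAback hBm hblock hreg hsum h3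
    · rw [if_neg hSA]
      unfold TronStuck at hSA
      push_neg at hSA
      obtain ⟨w, hadj, hwv⟩ := hSA
      have hwval : w.val + 1 = s.posA.val := by
        rcases pathAdj.mp hadj with h | h
        · exact absurd (hAback w h.symm) hwv
        · exact h
      refine ⟨w, hadj, hwv, ?_⟩
      apply IH f (by omega) false ⟨w, s.posB, insert w s.visited, s.scoreA + 1, s.scoreB⟩
      · dsimp only; omega
      · exact Finset.mem_insert_self _ _
      · dsimp only
        intro i hi
        have : i = s.posA := Fin.ext (by omega)
        exact this ▸ Finset.mem_insert_of_mem hmemA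
      · exact hBm
      · exact fun i hi => Finset.mem_insert_of_mem (hblock i hi)
      · intro i hi
        rcases Finset.mem_insert.mp hi with rfl | hi
        · omega
        · exact hreg i hi
      · dsimp only
        rw [Finset.card_insert_of_notMem hwv]
        omega
      · dsimp only; omega

/-- Upper bound, Bob starts right of Alice's block: Alice reaches score 3+m. -/
lemma ubRight {m : ℕ} (P : ℕ → ℕ → Prop) (hm2 : m + 2 < n)
    (hP : ∀ b, b ≤ n → P (3 + m) b) :
    ∀ f (turn : Bool) (s : TronState (Fin n)),
      s.posA.val ≤ m →
      s.posA ∈ s.visited →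
      (∀ i : Fin n, i.val = s.posA.val + 1 → i ∈ s.visited) →
      (∀ i : Fin n, i.val < s.posA.val → i ∉ s.visited) →
      m + 2 < s.posB.val →
      (∀ i : Fin n, i.val = m + 2 → i ∈ s.visited) →
      s.scoreA + s.posA.val = 3 + m →
      s.scoreA + s.scoreB ≤ s.visited.card →
      (turn = true → 2 * (n - s.visited.card) ≤ f ∧
        (s.posA.val = 0 → 2 * (n - s.visited.card) + 2 ≤ f)) →
      (turn = false → 2 * (n - s.visited.card) + 1 ≤ f) →
      tronForceA (pathG n).Adj P f turn s := by
  intro f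
  induction f using Nat.strong_induction_on with
  | _ f IH =>
  intro turn s hAm hmemA hAback hAfree hBm hblock hsA hsum hft hff
  have hcard : s.visited.card ≤ n := card_le_n _
  have hstuckA0 : s.posA.val = 0 → TronStuck (pathG n).Adj s.posA s.visited := by
    intro h0 w hw
    rcases pathAdj.mp hw with h | h
    · exact hAback w (by omega)
    · omega
  have hnstuckA : s.posA.val ≠ 0 → ¬ TronStuck (pathG n).Adj s.posA s.visited := by
    intro h0
    have hlt : s.posA.val - 1 < n := by omega
    have hadj : (pathG n).Adj s.posA ⟨s.posA.val - 1, hlt⟩ :=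
      pathAdj.mpr (Or.inr (by simp only [Fin.val_mk]; omega))
    exact notStuck hadj (hAfree _ (by simp only [Fin.val_mk]; omega))
  have hPify : ∀ b, s.scoreA = b → s.posA.val = 0 → P b s.scoreB := by
    rintro b rfl h0
    have : s.scoreA = 3 + m := by omega
    rw [this]
    exact hP _ (by omega)
  cases turn
  · -- Bob's turn
    have hf1 := hff rfl
    obtain ⟨f, rfl⟩ : ∃ f', f = f' + 1 := ⟨f - 1, by omega⟩
    rw [tronForceA]
    by_cases hSB : TronStuck (pathG n).Adj s.posB s.visited
    · rw [if_pos hSB]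
      by_cases hSA : TronStuck (pathG n).Adj s.posA s.visited
      · rw [if_pos hSA]
        have h0 : s.posA.val = 0 := by
          by_contra h0
          exact hnstuckA h0 hSA
        exact hPify _ rfl h0
      · rw [if_neg hSA]
        have h0 : s.posA.val ≠ 0 := fun h => hSA (hstuckA0 h)
        apply IH f (by omega) true s hAm hmemA hAback hAfree hBm hblock hsA hsum
        · intro _
          exact ⟨by omega, fun h => absurd h h0⟩
        · intro h; cases h
    · rw [if_neg hSB]
      intro w hadj hwv
      have hwm : m + 2 < w.val := by
        rcases pathAdj.mp hadj with h | h
        · omega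
        · by_contra hle
          have : w.val = m + 2 := by omega
          exact hwv (hblock w this)
      have hcard' : (insert w s.visited).card = s.visited.card + 1 :=
        Finset.card_insert_of_notMem hwv
      have hcard'' : s.visited.card + 1 ≤ n := hcard' ▸ card_le_n _
      apply IH f (by omega) true ⟨s.posA, w, insert w s.visited, s.scoreA, s.scoreB + 1⟩
      · exact hAm
      · exact Finset.mem_insert_of_mem hmemA
      · exact fun i hi => Finset.mem_insert_of_mem (hAback i hi)
      · dsimp only
        intro i hi
        simp only [Finset.mem_insert]
        push_neg
        exact ⟨fun h => by rw [h] at hi; omega, hAfree i hi⟩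
      · exact hwm
      · exact fun i hi => Finset.mem_insert_of_mem (hblock i hi)
      · exact hsA
      · dsimp only
        rw [hcard']
        omega
      · intro _
        dsimp only
        rw [hcard']
        exact ⟨by omega, fun _ => by omega⟩
      · intro h; cases h
  · -- Alice's turn
    have hf1 := hft rfl
    by_cases ha0 : s.posA.val = 0
    · have hSA := hstuckA0 ha0
      have hf2 := hf1.2 ha0
      obtain ⟨f, rfl⟩ : ∃ f', f = f' + 1 := ⟨f - 1, by omega⟩
      rw [tronForceA, if_pos hSA]
      by_cases hSB : TronStuck (pathG n).Adj s.posB s.visited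
      · rw [if_pos hSB]
        exact hPify _ rfl ha0
      · rw [if_neg hSB]
        apply IH f (by omega) false s hAm hmemA hAback hAfree hBm hblock hsA hsum
        · intro h; cases h
        · intro _; omega
    · -- Alice moves left
      have hlt : s.posA.val - 1 < n := by omega
      have hadj : (pathG n).Adj s.posA ⟨s.posA.val - 1, hlt⟩ :=
        pathAdj.mpr (Or.inr (by simp only [Fin.val_mk]; omega))
      have hnm : (⟨s.posA.val - 1, hlt⟩ : Fin n) ∉ s.visited :=
        hAfree _ (by simp only [Fin.val_mk]; omega)
      have hcard' : (insert (⟨s.posA.val - 1, hlt⟩ : Fin n) s.visited).card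
          = s.visited.card + 1 := Finset.card_insert_of_notMem hnm
      have hcard'' : s.visited.card + 1 ≤ n := hcard' ▸ card_le_n _
      obtain ⟨f, rfl⟩ : ∃ f', f = f' + 1 := ⟨f - 1, by omega⟩
      rw [tronForceA, if_neg (hnstuckA ha0)]
      refine ⟨⟨s.posA.val - 1, hlt⟩, hadj, hnm, ?_⟩
      apply IH f (by omega) false
        ⟨⟨s.posA.val - 1, hlt⟩, s.posB, insert _ s.visited, s.scoreA + 1, s.scoreB⟩
      · dsimp only [Fin.val_mk]; omega
      · exact Finset.mem_insert_self _ _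
      · dsimp only [Fin.val_mk]
        intro i hi
        have : i = s.posA := Fin.ext (by omega)
        rw [this]
        exact Finset.mem_insert_of_mem hmemA
      · dsimp only [Fin.val_mk]
        intro i hi
        simp only [Finset.mem_insert]
        push_neg
        refine ⟨fun h => ?_, hAfree i (by omega)⟩
        have := congrArg Fin.val h
        simp only [Fin.val_mk] at this
        omega
      · exact hBm
      · exact fun i hi => Finset.mem_insert_of_mem (hblock i hi)
      · dsimp only [Fin.val_mk]; omega
      · dsimp only
        rw [hcard']
        omega
      · intro h; cases h
      · intro _
        dsimp only
        rw [hcard']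
        omega

end Tron

set_option maxHeartbeats 2000000

/-- One-sided Tron on the path `P_n` (Alice starts and makes
two moves, occupying three consecutive vertices, before Bob picks his start
vertex): under optimal play the ratio Bob/Alice is `Θ(√n)`.  Concretely, there
are absolute constants `c₁, c₂ > 0` such that for all large `n`: whatever
three consecutive vertices Alice occupies (facing either direction), Bob has a
start forcing ratio at least `c₁√n`; and Alice has an opening after which she
forces ratio at most `c₂√n` against every Bob start. -/
theorem tron_one_sided_path_sqrt :
    ∃ c₁ c₂ : ℝ, 0 < c₁ ∧ 0 < c₂ ∧ ∃ N : ℕ, ∀ n, N ≤ n →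
      (∀ j : ℕ, ∀ h : j + 2 < n, ∀ cur : Fin n,
        (cur = ⟨j, by omega⟩ ∨ cur = ⟨j + 2, h⟩) →
        ∃ w : Fin n,
          w ∉ ({⟨j, by omega⟩, ⟨j + 1, by omega⟩, ⟨j + 2, h⟩} : Finset (Fin n)) ∧
          tronForceB (pathG n).Adj
            (fun a b => c₁ * Real.sqrt n ≤ (b : ℝ) / (a : ℝ)) (2 * n + 2) true
            ⟨cur, w, {⟨j, by omega⟩, ⟨j + 1, by omega⟩, ⟨j + 2, h⟩, w}, 3, 1⟩) ∧
      (∃ j : ℕ, ∃ h : j + 2 < n, ∃ cur : Fin n,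
        (cur = ⟨j, by omega⟩ ∨ cur = ⟨j + 2, h⟩) ∧
        ∀ w : Fin n,
          w ∉ ({⟨j, by omega⟩, ⟨j + 1, by omega⟩, ⟨j + 2, h⟩} : Finset (Fin n)) →
          tronForceA (pathG n).Adj
            (fun a b => (b : ℝ) / (a : ℝ) ≤ c₂ * Real.sqrt n) (2 * n + 2) true
            ⟨cur, w, {⟨j, by omega⟩, ⟨j + 1, by omega⟩, ⟨j + 2, h⟩, w}, 3, 1⟩) := by

  refine ⟨1/6, 1, by norm_num, by norm_num, 10000, ?_⟩
  intro n hn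
  have hsq1 : Nat.sqrt n * Nat.sqrt n ≤ n := by
    have := Nat.sqrt_le' n
    rwa [pow_two] at this
  set sq := Nat.sqrt n with hsqdef
  have hsq100 : 100 ≤ sq := Nat.le_sqrt.mpr (by omega)
  have h100 : 100 * sq ≤ n := le_trans (by nlinarith) hsq1
  have hn1 : 0 < n := by omega
  have hs0 : (0:ℝ) ≤ (sq:ℝ) := by positivity
  have hsq1r : (sq:ℝ) * (sq:ℝ) ≤ (n:ℝ) := by exact_mod_cast hsq1
  have hr1 : (sq:ℝ) ≤ Real.sqrt n := by
    have h := Real.sqrt_le_sqrt (show ((sq:ℝ))^2 ≤ (n:ℝ) by nlinarith [hsq1r])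
    rwa [Real.sqrt_sq hs0] at h
  have hr2 : Real.sqrt n ≤ (sq:ℝ) + 1 := by
    have hsq2 : n < (sq+1) * (sq+1) := by
      have := Nat.lt_succ_sqrt' n
      rwa [pow_two] at this
    have hsq2r : (n:ℝ) < ((sq:ℝ)+1) * ((sq:ℝ)+1) := by exact_mod_cast hsq2
    have h := Real.sqrt_le_sqrt (show (n:ℝ) ≤ ((sq:ℝ)+1)^2 by nlinarith [hsq2r])
    rwa [Real.sqrt_sq (by positivity)] at h
  have hsqr : Real.sqrt n * Real.sqrt n = n := Real.mul_self_sqrt (by positivity)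
  have hsq100' : (100:ℝ) ≤ (sq:ℝ) := by exact_mod_cast hsq100
  have h100r : (100:ℝ) * (sq:ℝ) ≤ (sq:ℝ) * (sq:ℝ) := by nlinarith [hsq100', hs0]
  constructor
  · -- lower bound: Bob forces ratio ≥ (1/6)√n
    intro j h cur hcur
    rcases hcur with rfl | rfl
    · -- Alice faces left, room x = j
      by_cases hbig : sq ≤ j
      · -- cut: Bob at j-1
        refine ⟨⟨j-1, by omega⟩, ?_, ?_⟩
        · simp only [Finset.mem_insert, Finset.mem_singleton, Fin.ext_iff, Fin.val_mk]
          omega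
        · have e : 2*n+2 = (2*n+1)+1 := rfl
          rw [e, tronForceB]
          dsimp only
          have hstA : TronStuck (pathG n).Adj (⟨j, by omega⟩ : Fin n)
              ({⟨j, by omega⟩, ⟨j + 1, by omega⟩, ⟨j + 2, h⟩, ⟨j-1, by omega⟩} : Finset (Fin n)) := by
            intro u hu
            simp only [Finset.mem_insert, Finset.mem_singleton, Fin.ext_iff, Fin.val_mk]
            rcases pathAdj.mp hu with hh | hh <;>
              simp only [Fin.val_mk] at hh <;> omega
          rw [if_pos hstA]
          have hadjB : (pathG n).Adj ⟨j-1, by omega⟩ ⟨j-2, by omega⟩ :=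
            pathAdj.mpr (Or.inr (by simp only [Fin.val_mk]; omega))
          have hnmB : (⟨j-2, by omega⟩ : Fin n) ∉
              ({⟨j, by omega⟩, ⟨j + 1, by omega⟩, ⟨j + 2, h⟩, ⟨j-1, by omega⟩} : Finset (Fin n)) := by
            simp only [Finset.mem_insert, Finset.mem_singleton, Fin.ext_iff, Fin.val_mk]
            omega
          rw [if_neg (notStuck hadjB hnmB)]
          apply walkLeft
          · exact hstA
          · intro i hi
            simp only [Fin.val_mk] at hi
            simp only [Finset.mem_insert, Finset.mem_singleton, Fin.ext_iff, Fin.val_mk]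
            omega
          · intro i hi
            simp only [Fin.val_mk] at hi
            simp only [Finset.mem_insert, Finset.mem_singleton, Fin.ext_iff, Fin.val_mk]
            omega
          · simp
          · simp only [Fin.val_mk]; omega
          · show (1:ℝ)/6 * Real.sqrt n ≤ ((1 + (j-1) : ℕ) : ℝ) / ((3:ℕ) : ℝ)
            have hje : ((1 + (j-1) : ℕ) : ℝ) = (j:ℝ) := by
              have : 1 + (j - 1) = j := by omega
              rw [this]
            rw [hje]
            have hjr : (sq:ℝ) ≤ (j:ℝ) := by exact_mod_cast hbig
            rw [le_div_iff₀ (by norm_num : (0:ℝ) < ((3:ℕ):ℝ))]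
            push_cast
            nlinarith [hr2, hjr, hsq100']
      · -- other side: Bob at j+3
        have hj3 : j + 3 < n := by omega
        refine ⟨⟨j+3, hj3⟩, ?_, ?_⟩
        · simp only [Finset.mem_insert, Finset.mem_singleton, Fin.ext_iff, Fin.val_mk]
          omega
        · apply bothWalk
          · simp only [Fin.val_mk]; omega
          · intro i hi
            simp only [Fin.val_mk] at hi
            simp only [Finset.mem_insert, Finset.mem_singleton, Fin.ext_iff, Fin.val_mk]
            omega
          · intro i hi
            simp only [Fin.val_mk] at hi
            simp only [Finset.mem_insert, Finset.mem_singleton, Fin.ext_iff, Fin.val_mk]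
            omega
          · simp
          · intro i hi
            simp only [Fin.val_mk] at hi
            simp only [Finset.mem_insert, Finset.mem_singleton, Fin.ext_iff, Fin.val_mk]
            omega
          · intro i hi
            simp only [Fin.val_mk] at hi
            simp only [Finset.mem_insert, Finset.mem_singleton, Fin.ext_iff, Fin.val_mk]
            omega
          · simp
          · simp only [Fin.val_mk]; omega
          · show (1:ℝ)/6 * Real.sqrt n ≤
              ((1 + (n - 1 - (j+3)) : ℕ) : ℝ) / ((3 + j : ℕ) : ℝ)
            have e1 : (1 + (n - 1 - (j+3)) : ℕ) = n - 3 - j := by omega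
            rw [e1]
            have e2 : ((n - 3 - j : ℕ) : ℝ) = (n:ℝ) - 3 - (j:ℝ) := by
              have : (n - 3 - j : ℕ) + 3 + j = n := by omega
              have := congrArg (fun k : ℕ => (k:ℝ)) this
              push_cast at this
              linarith
            rw [e2]
            have hjr : (j:ℝ) + 1 ≤ (sq:ℝ) := by exact_mod_cast (show j + 1 ≤ sq by omega)
            rw [le_div_iff₀ (by push_cast; positivity)]
            push_cast
            have key : Real.sqrt n * (3 + (j:ℝ)) ≤ ((sq:ℝ)+1) * ((sq:ℝ)+2) :=
              mul_le_mul hr2 (by linarith) (by positivity) (by positivity)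
            nlinarith [key, hsq1r, hjr, hsq100', h100r, Real.sqrt_nonneg (n:ℝ)]
    · -- Alice faces right, room x = n - 3 - j
      by_cases hbig : sq ≤ n - 3 - j
      · -- cut: Bob at j+3
        have hj3 : j + 3 < n := by omega
        refine ⟨⟨j+3, hj3⟩, ?_, ?_⟩
        · simp only [Finset.mem_insert, Finset.mem_singleton, Fin.ext_iff, Fin.val_mk]
          omega
        · have e : 2*n+2 = (2*n+1)+1 := rfl
          rw [e, tronForceB]
          dsimp only
          have hstA : TronStuck (pathG n).Adj (⟨j+2, h⟩ : Fin n)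
              ({⟨j, by omega⟩, ⟨j + 1, by omega⟩, ⟨j + 2, h⟩, ⟨j+3, hj3⟩} : Finset (Fin n)) := by
            intro u hu
            simp only [Finset.mem_insert, Finset.mem_singleton, Fin.ext_iff, Fin.val_mk]
            rcases pathAdj.mp hu with hh | hh <;>
              simp only [Fin.val_mk] at hh <;> omega
          rw [if_pos hstA]
          have hj4 : j + 4 < n := by omega
          have hadjB : (pathG n).Adj ⟨j+3, hj3⟩ ⟨j+4, hj4⟩ :=
            pathAdj.mpr (Or.inl (by simp only [Fin.val_mk]))
          have hnmB : (⟨j+4, hj4⟩ : Fin n) ∉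
              ({⟨j, by omega⟩, ⟨j + 1, by omega⟩, ⟨j + 2, h⟩, ⟨j+3, hj3⟩} : Finset (Fin n)) := by
            simp only [Finset.mem_insert, Finset.mem_singleton, Fin.ext_iff, Fin.val_mk]
            omega
          rw [if_neg (notStuck hadjB hnmB)]
          apply walkRight
          · exact hstA
          · intro i hi
            simp only [Fin.val_mk] at hi
            simp only [Finset.mem_insert, Finset.mem_singleton, Fin.ext_iff, Fin.val_mk]
            omega
          · intro i hi
            simp only [Fin.val_mk] at hi
            simp only [Finset.mem_insert, Finset.mem_singleton, Fin.ext_iff, Fin.val_mk]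
            omega
          · simp
          · simp only [Fin.val_mk]; omega
          · show (1:ℝ)/6 * Real.sqrt n ≤
              ((1 + (n - 1 - (j+3)) : ℕ) : ℝ) / ((3:ℕ) : ℝ)
            have e1 : (1 + (n - 1 - (j+3)) : ℕ) = n - 3 - j := by omega
            rw [e1]
            have hxr : (sq:ℝ) ≤ ((n - 3 - j : ℕ) : ℝ) := by exact_mod_cast hbig
            rw [le_div_iff₀ (by norm_num : (0:ℝ) < ((3:ℕ):ℝ))]
            push_cast
            nlinarith [hr2, hxr, hsq100']
      · -- other side: Bob at j-1
        have hj1 : 1 ≤ j := by omega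
        refine ⟨⟨j-1, by omega⟩, ?_, ?_⟩
        · simp only [Finset.mem_insert, Finset.mem_singleton, Fin.ext_iff, Fin.val_mk]
          omega
        · apply bothWalkR
          · simp only [Fin.val_mk]; omega
          · intro i hi
            simp only [Fin.val_mk] at hi
            simp only [Finset.mem_insert, Finset.mem_singleton, Fin.ext_iff, Fin.val_mk]
            omega
          · intro i hi
            simp only [Fin.val_mk] at hi
            simp only [Finset.mem_insert, Finset.mem_singleton, Fin.ext_iff, Fin.val_mk]
            omega
          · simp
          · intro i hi
            simp only [Fin.val_mk] at hi
            simp only [Finset.mem_insert, Finset.mem_singleton, Fin.ext_iff, Fin.val_mk]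
            omega
          · intro i hi
            simp only [Fin.val_mk] at hi
            simp only [Finset.mem_insert, Finset.mem_singleton, Fin.ext_iff, Fin.val_mk]
            omega
          · simp
          · simp only [Fin.val_mk]; omega
          · show (1:ℝ)/6 * Real.sqrt n ≤
              ((1 + (j-1) : ℕ) : ℝ) / ((3 + (n - 1 - (j+2)) : ℕ) : ℝ)
            have e1 : (1 + (j - 1) : ℕ) = j := by omega
            have e2 : (3 + (n - 1 - (j+2)) : ℕ) = 3 + (n - 3 - j) := by omega
            rw [e1, e2]
            have hxr : ((n - 3 - j : ℕ) : ℝ) + 1 ≤ (sq:ℝ) := by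
              have hxn : n - 3 - j + 1 ≤ sq := by omega
              exact_mod_cast hxn
            have e3 : (j:ℝ) = (n:ℝ) - 3 - ((n - 3 - j : ℕ) : ℝ) := by
              have e3' : (n - 3 - j) + 3 + j = n := by omega
              have e3r : ((n - 3 - j : ℕ):ℝ) + 3 + (j:ℝ) = (n:ℝ) := by exact_mod_cast e3'
              linarith
            rw [le_div_iff₀ (by push_cast; positivity)]
            push_cast
            rw [e3]
            have key : Real.sqrt n * (3 + ((n - 3 - j : ℕ):ℝ)) ≤ ((sq:ℝ)+1) * ((sq:ℝ)+2) :=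
              mul_le_mul hr2 (by linarith) (by positivity) (by positivity)
            nlinarith [key, hsq1r, hxr, hsq100', h100r, Real.sqrt_nonneg (n:ℝ),
              (by positivity : (0:ℝ) ≤ ((n - 3 - j : ℕ):ℝ))]
  · -- upper bound: Alice opens at sq, sq+1, sq+2 facing left
    have hsqn : sq + 2 < n := by omega
    refine ⟨sq, hsqn, ⟨sq, by omega⟩, Or.inl rfl, ?_⟩
    intro w hw
    have hwv : w.val < sq ∨ sq + 2 < w.val := by
      by_contra hcon
      push_neg at hcon
      apply hw
      simp only [Finset.mem_insert, Finset.mem_singleton, Fin.ext_iff, Fin.val_mk]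
      omega
    have hcard4 : (4:ℕ) ≤
        ({⟨sq, by omega⟩, ⟨sq + 1, by omega⟩, ⟨sq + 2, hsqn⟩, w} : Finset (Fin n)).card := by
      rw [Finset.card_insert_of_notMem (by
            simp only [Finset.mem_insert, Finset.mem_singleton, Fin.ext_iff, Fin.val_mk]
            omega),
          Finset.card_insert_of_notMem (by
            simp only [Finset.mem_insert, Finset.mem_singleton, Fin.ext_iff, Fin.val_mk]
            omega),
          Finset.card_insert_of_notMem (by
            simp only [Finset.mem_singleton, Fin.ext_iff, Fin.val_mk]
            omega),
          Finset.card_singleton]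
    rcases hwv with hwlt | hwgt
    · -- Bob starts left of the block
      apply ubLeft (m := sq) _ hsqn
      · intro a b h3 hb
        have ha1 : (1:ℝ) ≤ (a:ℝ) := by exact_mod_cast le_trans (by omega) h3
        have hbr : (b:ℝ) ≤ (sq:ℝ) := by exact_mod_cast hb
        rw [div_le_iff₀ (by linarith)]
        nlinarith [hr1, Real.sqrt_nonneg (n:ℝ)]
      · simp only [Fin.val_mk]; omega
      · simp
      · intro i hi
        try simp only [Fin.val_mk] at hi
        simp only [Finset.mem_insert, Finset.mem_singleton, Fin.ext_iff, Fin.val_mk]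
        omega
      · exact hwlt
      · intro i hi
        try simp only [Fin.val_mk] at hi
        simp only [Finset.mem_insert, Finset.mem_singleton, Fin.ext_iff, Fin.val_mk]
        omega
      · intro i hi
        simp only [Finset.mem_insert, Finset.mem_singleton, Fin.ext_iff, Fin.val_mk] at hi
        omega
      · exact hcard4
      · exact le_refl 3
    · -- Bob starts right of the block
      apply ubRight (m := sq) _ hsqn
      · intro b hb
        have hbr : (b:ℝ) ≤ (n:ℝ) := by exact_mod_cast hb
        show (b:ℝ) / ((3 + sq : ℕ):ℝ) ≤ 1 * Real.sqrt n
        rw [div_le_iff₀ (by push_cast; positivity)]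
        push_cast
        nlinarith [hr2, hsqr, Real.sqrt_nonneg (n:ℝ)]
      · simp only [Fin.val_mk]; omega
      · simp
      · intro i hi
        try simp only [Fin.val_mk] at hi
        simp only [Finset.mem_insert, Finset.mem_singleton, Fin.ext_iff, Fin.val_mk]
        omega
      · intro i hi
        try simp only [Fin.val_mk] at hi
        simp only [Finset.mem_insert, Finset.mem_singleton, Fin.ext_iff, Fin.val_mk]
        omega
      · exact hwgt
      · intro i hi
        simp only [Finset.mem_insert, Finset.mem_singleton, Fin.ext_iff, Fin.val_mk]
        omega
      · simp only [Fin.val_mk]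
      · exact hcard4
      · intro _
        exact ⟨by omega, fun _ => by omega⟩
      · intro hcon
        cases hcon
end

section
/- The double-tree of degree d >= 2 and height h has a Hamiltonian path from one of its two roots to the other. -/
/-- Vertices of a complete `d`-ary tree of height `h` are lists of child
indices (root-to-vertex paths): entries `< d`, length `≤ h`.  A vertex of the
double-tree is such a list tagged with the half (`true` = upper). -/
def dtValid (d h : ℕ) (p : Bool × List ℕ) : Prop :=
  p.2.length ≤ h ∧ ∀ x ∈ p.2, x < d

/-- Leaves are the vertices at depth exactly `h`. -/
def dtLeaf (h : ℕ) (p : Bool × List ℕ) : Prop := p.2.length = h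

/-- Left-to-right (0-based) index of a leaf: the value of its digit list in
base `d`.  The leaf named `u^j_n` (or `v^j_n`), `1 ≤ j ≤ l = d^(h-1)`,
`1 ≤ n ≤ d`, has index `(j-1)*d + (n-1)`. -/
def dtOrd (d : ℕ) (l : List ℕ) : ℕ := l.foldl (fun a x => a * d + x) 0

/-- The cross edges `E₂` in terms of the 0-based leaf indices `s` (upper) and
`t` (lower): `u^j_n ~ v^j_m` for `n ≤ m`, `u^j_n ~ v^(j+1)_m` for `m < n`, and
`u^l_n ~ v^1_m` for `m < n`. -/
def dtCross (d h s t : ℕ) : Prop :=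
  (s / d = t / d ∧ s % d ≤ t % d) ∨
  (t / d = s / d + 1 ∧ t % d < s % d) ∨
  (s / d + 1 = d ^ (h - 1) ∧ t / d = 0 ∧ t % d < s % d)

/-- The double-tree of degree `d` and height `h`: two complete `d`-ary trees
of height `h`, leaf edges `E₁` joining consecutive leaves inside each half,
and cross edges `E₂` between the two leaf rows. -/
def doubleTree (d h : ℕ) : SimpleGraph (Bool × List ℕ) :=
  SimpleGraph.fromRel (fun p q =>
    dtValid d h p ∧ dtValid d h q ∧
    ((p.1 = q.1 ∧ ∃ a, q.2 = p.2 ++ [a]) ∨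
     (p.1 = q.1 ∧ dtLeaf h p ∧ dtLeaf h q ∧ dtOrd d q.2 = dtOrd d p.2 + 1) ∨
     (p.1 = true ∧ q.1 = false ∧ dtLeaf h p ∧ dtLeaf h q ∧
       dtCross d h (dtOrd d p.2) (dtOrd d q.2))))

/-- The digit list of the leaf with 0-based index `t`. -/
def dtLeafList (d h t : ℕ) : List ℕ :=
  (List.range h).map (fun i => t / d ^ (h - 1 - i) % d)

/-- The upper leaf with 0-based index `t` (`u^j_n` for `t = (j-1)*d+(n-1)`). -/
def uLeaf (d h t : ℕ) : Bool × List ℕ := (true, dtLeafList d h t)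

/-- The lower leaf with 0-based index `t`. -/
def vLeaf (d h t : ℕ) : Bool × List ℕ := (false, dtLeafList d h t)

namespace DT

/-- prefix every list with digit `i` -/
def mp (i : ℕ) (L : List (List ℕ)) : List (List ℕ) := L.map (i :: ·)

/-- the three Hamiltonian path schemes of one half:
`A` root→rightmost leaf, `B` leftmost leaf→rightmost leaf, `C` leftmost leaf→root. -/
def blk (d : ℕ) (B : List (List ℕ)) (s n : ℕ) : List (List ℕ) :=
  (List.range' s n).flatMap fun i => mp i B

def ABC (d : ℕ) : ℕ → List (List ℕ) × List (List ℕ) × List (List ℕ)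
  | 0 => ([[]], [[]], [[]])
  | h+1 =>
    ([] :: (mp 0 (ABC d h).1 ++ blk d (ABC d h).2.1 1 (d-1)),
     blk d (ABC d h).2.1 0 (d-2) ++
       (mp (d-2) (ABC d h).2.2 ++ ([] :: mp (d-1) (ABC d h).1)),
     blk d (ABC d h).2.1 0 (d-1) ++
       (mp (d-1) (ABC d h).2.2 ++ [[]]))

/-- adjacency skeleton in one half at height `m` -/
def Rel (d m : ℕ) (x y : List ℕ) : Prop :=
  (∃ a, y = x ++ [a]) ∨ (∃ a, x = y ++ [a]) ∨
  (x.length = m ∧ y.length = m ∧ dtOrd d y = dtOrd d x + 1)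

lemma foldl_shift (d : ℕ) : ∀ (l : List ℕ) (a : ℕ),
    l.foldl (fun a x => a * d + x) a = a * d ^ l.length + dtOrd d l := by
  intro l
  induction l with
  | nil => intro a; simp [dtOrd]
  | cons x l ih =>
    intro a
    simp only [dtOrd, List.foldl_cons, List.length_cons, Nat.zero_mul, Nat.zero_add]
    rw [ih (a * d + x), ih x]
    ring

lemma ord_cons (d i : ℕ) (l : List ℕ) :
    dtOrd d (i :: l) = i * d ^ l.length + dtOrd d l := by
  have : dtOrd d (i :: l) = l.foldl (fun a x => a * d + x) i := by
    simp [dtOrd]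
  rw [this, foldl_shift]

lemma ord_rep_zero (d h : ℕ) : dtOrd d (List.replicate h 0) = 0 := by
  induction h with
  | zero => rfl
  | succ h ih => rw [List.replicate_succ, ord_cons, ih]; simp

lemma ord_rep_top (d h : ℕ) (hd : 1 ≤ d) :
    dtOrd d (List.replicate h (d-1)) = d ^ h - 1 := by
  induction h with
  | zero => rfl
  | succ h ih =>
    rw [List.replicate_succ, ord_cons, ih, List.length_replicate]
    have h1 : 1 ≤ d ^ h := Nat.one_le_pow _ _ hd
    have e1 : (d-1) * d ^ h = d ^ (h+1) - d ^ h := by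
      rw [Nat.sub_mul, one_mul, pow_succ, mul_comm]
    have h2 : d ^ h ≤ d ^ (h+1) := Nat.pow_le_pow_right hd (by omega)
    omega

lemma rel_lift (d m i : ℕ) {x y : List ℕ} (h : Rel d m x y) :
    Rel d (m+1) (i :: x) (i :: y) := by
  rcases h with ⟨a, ha⟩ | ⟨a, ha⟩ | ⟨hx, hy, ho⟩
  · exact Or.inl ⟨a, by simp [ha]⟩
  · exact Or.inr (Or.inl ⟨a, by simp [ha]⟩)
  · refine Or.inr (Or.inr ⟨by simp [hx], by simp [hy], ?_⟩)
    rw [ord_cons, ord_cons, hx, hy, ho]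
    ring

lemma rel_step (d m i : ℕ) (hd : 1 ≤ d) :
    Rel d (m+1) (i :: List.replicate m (d-1)) ((i+1) :: List.replicate m 0) := by
  refine Or.inr (Or.inr ⟨by simp, by simp, ?_⟩)
  rw [ord_cons, ord_cons, ord_rep_zero, ord_rep_top _ _ hd]
  simp only [List.length_replicate]
  have h1 : 1 ≤ d ^ m := Nat.one_le_pow _ _ hd
  ring_nf
  omega

end DT

namespace DT

open List

/-- validity of a digit list -/
def Hv (d h : ℕ) (l : List ℕ) : Prop := l.length ≤ h ∧ ∀ a ∈ l, a < d

structure Good (d h : ℕ) (X : List (List ℕ)) (hd lst : List ℕ) : Prop where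
  mem : ∀ l, l ∈ X ↔ Hv d h l
  nodup : X.Nodup
  chain : X.IsChain (Rel d h)
  head : X.head? = some hd
  last : X.getLast? = some lst

lemma rel_down (d m : ℕ) (l : List ℕ) (a : ℕ) : Rel d m l (l ++ [a]) := Or.inl ⟨a, rfl⟩
lemma rel_up (d m : ℕ) (l : List ℕ) (a : ℕ) : Rel d m (l ++ [a]) l := Or.inr (Or.inl ⟨a, rfl⟩)

lemma mem_mp {i : ℕ} {X : List (List ℕ)} {l : List ℕ} :
    l ∈ mp i X ↔ ∃ l', l' ∈ X ∧ l = i :: l' := by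
  simp [mp, eq_comm]

lemma head?_mp (i : ℕ) (X : List (List ℕ)) : (mp i X).head? = X.head?.map (i :: ·) := by
  simp [mp, List.head?_map]

lemma getLast?_mp (i : ℕ) (X : List (List ℕ)) :
    (mp i X).getLast? = X.getLast?.map (i :: ·) := by
  simp [mp, List.getLast?_map]

lemma chain_mp {d m i : ℕ} {X : List (List ℕ)} (h : X.IsChain (Rel d m)) :
    (mp i X).IsChain (Rel d (m+1)) := by
  rw [mp, List.isChain_map]
  exact h.imp (fun a b hab => rel_lift d m i hab)

lemma nodup_mp {i : ℕ} {X : List (List ℕ)} (h : X.Nodup) : (mp i X).Nodup :=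
  h.map (fun a b hab => by simpa using hab)

section Blk

variable {d h : ℕ} {B : List (List ℕ)} (hd2 : 2 ≤ d)
variable (hB : Good d h B (List.replicate h 0) (List.replicate h (d-1)))

lemma blk_succ (s n : ℕ) : blk d B s (n+1) = mp s B ++ blk d B (s+1) n := by
  simp [blk, List.range'_succ]

lemma blk_mem {s n : ℕ} {l : List ℕ} :
    l ∈ blk d B s n ↔ ∃ i, s ≤ i ∧ i < s + n ∧ ∃ l', l' ∈ B ∧ l = i :: l' := by
  simp only [blk, List.mem_flatMap, List.mem_range'_1, mem_mp]
  constructor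
  · rintro ⟨i, ⟨h1, h2⟩, l', hl', rfl⟩; exact ⟨i, h1, h2, l', hl', rfl⟩
  · rintro ⟨i, h1, h2, l', hl', rfl⟩; exact ⟨i, ⟨h1, h2⟩, l', hl', rfl⟩

include hB in
lemma blk_head {s n : ℕ} (hn : 1 ≤ n) :
    (blk d B s n).head? = some (s :: List.replicate h 0) := by
  obtain ⟨n, rfl⟩ := Nat.exists_eq_add_of_le hn
  rw [Nat.add_comm, blk_succ, List.head?_append, head?_mp, hB.head]
  rfl

include hB in
lemma blk_last : ∀ n s, 1 ≤ n →
    (blk d B s n).getLast? = some ((s + n - 1) :: List.replicate h (d-1))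
  | 0, s, hn => by omega
  | 1, s, _ => by
      rw [blk_succ]
      simp [blk, getLast?_mp, hB.last]
  | (n+2), s, _ => by
      rw [blk_succ, List.getLast?_append, blk_last (n+1) (s+1) (by omega)]
      show some _ = some _
      congr 2
      omega

include hB hd2 in
lemma blk_chain : ∀ n s, (blk d B s n).IsChain (Rel d (h+1))
  | 0, s => by simp [blk]
  | (n+1), s => by
      rw [blk_succ]
      refine (chain_mp hB.chain).append (blk_chain n (s+1)) ?_
      intro x hx y hy
      rcases Nat.eq_zero_or_pos n with rfl | hn
      · simp [blk] at hy
      · rw [blk_head hB hn] at hy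
        rw [getLast?_mp, hB.last] at hx
        simp only [Option.mem_def, Option.map_some, Option.some.injEq] at hx hy
        subst hx; subst hy
        exact rel_step d h s (by omega)

include hB in
lemma blk_nodup : ∀ n s, (blk d B s n).Nodup
  | 0, s => by simp [blk]
  | (n+1), s => by
      rw [blk_succ]
      refine (nodup_mp hB.nodup).append (blk_nodup n (s+1)) ?_
      intro l hl hl'
      rw [mem_mp] at hl
      rw [blk_mem] at hl'
      obtain ⟨l', _, rfl⟩ := hl
      obtain ⟨i, hi, _, l'', _, he⟩ := hl'
      cases he
      omega

end Blk

end DT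

namespace DT

open List

section Step

variable {d h : ℕ} {A B C : List (List ℕ)}

lemma hv_cons {i : ℕ} {l : List ℕ} : Hv d (h+1) (i :: l) ↔ i < d ∧ Hv d h l := by
  constructor
  · rintro ⟨h1, h2⟩
    exact ⟨h2 i (by simp), by simpa using h1, fun a ha => h2 a (by simp [ha])⟩
  · rintro ⟨hi, h1, h2⟩
    exact ⟨by simpa using Nat.succ_le_succ h1, by
      intro a ha
      rcases List.mem_cons.mp ha with rfl | ha
      · exact hi
      · exact h2 a ha⟩

lemma stepA (hd2 : 2 ≤ d)
    (hA : Good d h A [] (replicate h (d-1)))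
    (hB : Good d h B (replicate h 0) (replicate h (d-1))) :
    Good d (h+1) ([] :: (mp 0 A ++ blk d B 1 (d-1))) [] (replicate (h+1) (d-1)) where
  mem l := by
    constructor
    · intro hl
      rcases List.mem_cons.mp hl with rfl | hl
      · exact ⟨by simp, by simp⟩
      rcases List.mem_append.mp hl with hl | hl
      · rw [mem_mp] at hl
        obtain ⟨l', hl', rfl⟩ := hl
        exact hv_cons.mpr ⟨by omega, (hA.mem l').mp hl'⟩
      · rw [blk_mem] at hl
        obtain ⟨i, hi1, hi2, l', hl', rfl⟩ := hl
        exact hv_cons.mpr ⟨by omega, (hB.mem l').mp hl'⟩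
    · intro hv
      match l with
      | [] => exact List.mem_cons_self
      | i :: l' =>
        obtain ⟨hi, hv'⟩ := hv_cons.mp hv
        rcases Nat.eq_zero_or_pos i with rfl | hi0
        · exact List.mem_cons_of_mem _ (List.mem_append_left _
            (mem_mp.mpr ⟨l', (hA.mem l').mpr hv', rfl⟩))
        · exact List.mem_cons_of_mem _ (List.mem_append_right _
            (blk_mem.mpr ⟨i, hi0, by omega, l', (hB.mem l').mpr hv', rfl⟩))
  nodup := by
    refine List.nodup_cons.mpr ⟨?_, ?_⟩
    · intro hmem
      rcases List.mem_append.mp hmem with hl | hl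
      · rw [mem_mp] at hl
        obtain ⟨l', _, he⟩ := hl
        exact List.cons_ne_nil _ _ he.symm
      · rw [blk_mem] at hl
        obtain ⟨i, _, _, l', _, he⟩ := hl
        exact List.cons_ne_nil _ _ he.symm
    · refine (nodup_mp hA.nodup).append (blk_nodup hB _ _) ?_
      intro x hx hx'
      rw [mem_mp] at hx
      rw [blk_mem] at hx'
      obtain ⟨l', _, rfl⟩ := hx
      obtain ⟨i, hi, _, l'', _, he⟩ := hx'
      cases he
      omega
  chain := by
    rw [List.isChain_cons]
    constructor
    · intro y hy
      rw [List.head?_append, head?_mp, hA.head] at hy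
      simp only [Option.map_some] at hy
      have : y = [0] := by
        cases hy
        rfl
      subst this
      exact rel_down d (h+1) [] 0
    · refine (chain_mp hA.chain).append (blk_chain hd2 hB _ _) ?_
      intro x hx y hy
      rw [getLast?_mp, hA.last] at hx
      rw [blk_head hB (by omega)] at hy
      simp only [Option.mem_def, Option.map_some, Option.some.injEq] at hx hy
      subst hx; subst hy
      exact rel_step d h 0 (by omega)
  head := rfl
  last := by
    show (([[]] ++ (mp 0 A ++ blk d B 1 (d-1)))).getLast? = _
    rw [List.getLast?_append, List.getLast?_append, blk_last hB _ _ (by omega)]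
    show some _ = some _
    rw [List.replicate_succ]
    congr 2
    omega

lemma stepB (hd2 : 2 ≤ d)
    (hA : Good d h A [] (replicate h (d-1)))
    (hB : Good d h B (replicate h 0) (replicate h (d-1)))
    (hC : Good d h C (replicate h 0) []) :
    Good d (h+1) (blk d B 0 (d-2) ++ (mp (d-2) C ++ ([] :: mp (d-1) A)))
      (replicate (h+1) 0) (replicate (h+1) (d-1)) where
  mem l := by
    constructor
    · intro hl
      rcases List.mem_append.mp hl with hl | hl
      · rw [blk_mem] at hl
        obtain ⟨i, hi1, hi2, l', hl', rfl⟩ := hl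
        exact hv_cons.mpr ⟨by omega, (hB.mem l').mp hl'⟩
      rcases List.mem_append.mp hl with hl | hl
      · rw [mem_mp] at hl
        obtain ⟨l', hl', rfl⟩ := hl
        exact hv_cons.mpr ⟨by omega, (hC.mem l').mp hl'⟩
      rcases List.mem_cons.mp hl with rfl | hl
      · exact ⟨by simp, by simp⟩
      · rw [mem_mp] at hl
        obtain ⟨l', hl', rfl⟩ := hl
        exact hv_cons.mpr ⟨by omega, (hA.mem l').mp hl'⟩
    · intro hv
      match l with
      | [] =>
        exact List.mem_append_right _ (List.mem_append_right _ (List.mem_cons_self))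
      | i :: l' =>
        obtain ⟨hi, hv'⟩ := hv_cons.mp hv
        rcases Nat.lt_or_ge i (d-2) with hi0 | hi0
        · exact List.mem_append_left _
            (blk_mem.mpr ⟨i, by omega, by omega, l', (hB.mem l').mpr hv', rfl⟩)
        rcases Nat.lt_or_ge i (d-1) with hi1 | hi1
        · have : i = d - 2 := by omega
          subst this
          exact List.mem_append_right _ (List.mem_append_left _
            (mem_mp.mpr ⟨l', (hC.mem l').mpr hv', rfl⟩))
        · have : i = d - 1 := by omega
          subst this
          exact List.mem_append_right _ (List.mem_append_right _
            (List.mem_cons_of_mem _ (mem_mp.mpr ⟨l', (hA.mem l').mpr hv', rfl⟩)))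
  nodup := by
    refine List.Nodup.append (blk_nodup hB _ _) ?_ ?_
    · refine List.Nodup.append (nodup_mp hC.nodup) ?_ ?_
      · refine List.nodup_cons.mpr ⟨?_, nodup_mp hA.nodup⟩
        intro hmem
        rw [mem_mp] at hmem
        obtain ⟨l', _, he⟩ := hmem
        exact List.cons_ne_nil _ _ he.symm
      · intro x hx hx'
        rw [mem_mp] at hx
        obtain ⟨l', _, rfl⟩ := hx
        rcases List.mem_cons.mp hx' with he | hx'
        · exact List.cons_ne_nil _ _ he
        · rw [mem_mp] at hx'
          obtain ⟨l'', _, he⟩ := hx'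
          simp only [List.cons.injEq] at he
          omega
    · intro x hx hx'
      rw [blk_mem] at hx
      obtain ⟨i, hi1, hi2, l', _, rfl⟩ := hx
      rcases List.mem_append.mp hx' with hx' | hx'
      · rw [mem_mp] at hx'
        obtain ⟨l'', _, he⟩ := hx'
        simp only [List.cons.injEq] at he
        omega
      rcases List.mem_cons.mp hx' with he | hx'
      · exact List.cons_ne_nil _ _ he
      · rw [mem_mp] at hx'
        obtain ⟨l'', _, he⟩ := hx'
        simp only [List.cons.injEq] at he
        omega
  chain := by
    have chain2 : (mp (d-2) C ++ ([] :: mp (d-1) A)).IsChain (Rel d (h+1)) := by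
      refine (chain_mp hC.chain).append ?_ ?_
      · rw [List.isChain_cons]
        refine ⟨?_, chain_mp hA.chain⟩
        intro y hy
        rw [head?_mp, hA.head] at hy
        simp only [Option.mem_def, Option.map_some, Option.some.injEq] at hy
        subst hy
        exact rel_down d (h+1) [] (d-1)
      · intro x hx y hy
        rw [getLast?_mp, hC.last] at hx
        simp only [Option.mem_def, Option.map_some, Option.some.injEq] at hx
        subst hx
        simp only [List.head?_cons, Option.mem_def, Option.some.injEq] at hy
        subst hy
        exact rel_up d (h+1) [] (d-2)
    refine (blk_chain hd2 hB _ _).append chain2 ?_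
    intro x hx y hy
    rcases Nat.lt_or_ge d 3 with hd3 | hd3
    · have : d - 2 = 0 := by omega
      rw [this] at hx
      simp [blk] at hx
    · rw [blk_last hB _ _ (by omega)] at hx
      rw [List.head?_append, head?_mp, hC.head] at hy
      simp only [Option.mem_def, Option.map_some, Option.some.injEq] at hx hy
      subst hx
      cases hy
      have he : (0:ℕ) + (d - 2) - 1 = d - 3 := by omega
      have he2 : d - 2 = (d - 3) + 1 := by omega
      rw [he, he2]
      exact rel_step d h (d-3) (by omega)
  head := by
    rcases Nat.lt_or_ge d 3 with hd3 | hd3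
    · have h0 : d - 2 = 0 := by omega
      rw [h0]
      show (blk d B 0 0 ++ (mp 0 C ++ _)).head? = _
      rw [show blk d B 0 0 = [] from by simp [blk], List.nil_append, List.head?_append,
        head?_mp, hC.head]
      simp [List.replicate_succ]
    · rw [List.head?_append, blk_head hB (by omega)]
      simp [List.replicate_succ]
  last := by
    rw [List.getLast?_append, List.getLast?_append]
    have : ([] :: mp (d-1) A).getLast? = some ((d-1) :: replicate h (d-1)) := by
      show ([[]] ++ mp (d-1) A).getLast? = _
      rw [List.getLast?_append, getLast?_mp, hA.last]
      rfl
    rw [this]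
    show some _ = some _
    rw [List.replicate_succ]

lemma stepC (hd2 : 2 ≤ d)
    (hB : Good d h B (replicate h 0) (replicate h (d-1)))
    (hC : Good d h C (replicate h 0) []) :
    Good d (h+1) (blk d B 0 (d-1) ++ (mp (d-1) C ++ [[]]))
      (replicate (h+1) 0) [] where
  mem l := by
    constructor
    · intro hl
      rcases List.mem_append.mp hl with hl | hl
      · rw [blk_mem] at hl
        obtain ⟨i, hi1, hi2, l', hl', rfl⟩ := hl
        exact hv_cons.mpr ⟨by omega, (hB.mem l').mp hl'⟩
      rcases List.mem_append.mp hl with hl | hl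
      · rw [mem_mp] at hl
        obtain ⟨l', hl', rfl⟩ := hl
        exact hv_cons.mpr ⟨by omega, (hC.mem l').mp hl'⟩
      · have : l = [] := by simpa using hl
        subst this
        exact ⟨by simp, by simp⟩
    · intro hv
      match l with
      | [] => exact List.mem_append_right _ (List.mem_append_right _ (by simp))
      | i :: l' =>
        obtain ⟨hi, hv'⟩ := hv_cons.mp hv
        rcases Nat.lt_or_ge i (d-1) with hi0 | hi0
        · exact List.mem_append_left _
            (blk_mem.mpr ⟨i, by omega, by omega, l', (hB.mem l').mpr hv', rfl⟩)
        · have : i = d - 1 := by omega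
          subst this
          exact List.mem_append_right _ (List.mem_append_left _
            (mem_mp.mpr ⟨l', (hC.mem l').mpr hv', rfl⟩))
  nodup := by
    refine List.Nodup.append (blk_nodup hB _ _) ?_ ?_
    · refine List.Nodup.append (nodup_mp hC.nodup) (by simp) ?_
      intro x hx hx'
      rw [mem_mp] at hx
      obtain ⟨l', _, rfl⟩ := hx
      have : (d-1) :: l' = [] := by simpa using hx'
      exact List.cons_ne_nil _ _ this
    · intro x hx hx'
      rw [blk_mem] at hx
      obtain ⟨i, hi1, hi2, l', _, rfl⟩ := hx
      rcases List.mem_append.mp hx' with hx' | hx'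
      · rw [mem_mp] at hx'
        obtain ⟨l'', _, he⟩ := hx'
        simp only [List.cons.injEq] at he
        omega
      · have : i :: l' = [] := by simpa using hx'
        exact List.cons_ne_nil _ _ this
  chain := by
    have chain2 : (mp (d-1) C ++ [[]]).IsChain (Rel d (h+1)) := by
      refine (chain_mp hC.chain).append (by simp) ?_
      intro x hx y hy
      rw [getLast?_mp, hC.last] at hx
      simp only [Option.mem_def, Option.map_some, Option.some.injEq] at hx
      subst hx
      simp only [List.head?_cons, Option.mem_def, Option.some.injEq] at hy
      subst hy
      exact rel_up d (h+1) [] (d-1)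
    refine (blk_chain hd2 hB _ _).append chain2 ?_
    intro x hx y hy
    rw [blk_last hB _ _ (by omega)] at hx
    rw [List.head?_append, head?_mp, hC.head] at hy
    simp only [Option.mem_def, Option.map_some, Option.some.injEq] at hx hy
    subst hx
    cases hy
    have he : (0:ℕ) + (d - 1) - 1 = d - 2 := by omega
    rw [he]
    have := rel_step d h (d-2) (by omega)
    rwa [show d - 2 + 1 = d - 1 from by omega] at this
  head := by
    rw [List.head?_append, blk_head hB (by omega)]
    simp [List.replicate_succ]
  last := by
    rw [List.getLast?_append, List.getLast?_append]
    rfl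

theorem good_ABC (d : ℕ) (hd2 : 2 ≤ d) : ∀ h,
    Good d h (ABC d h).1 [] (List.replicate h (d-1)) ∧
    Good d h (ABC d h).2.1 (List.replicate h 0) (List.replicate h (d-1)) ∧
    Good d h (ABC d h).2.2 (List.replicate h 0) []
  | 0 => by
    refine ⟨?_, ?_, ?_⟩ <;>
      exact { mem := fun l => by
                constructor
                · intro hl
                  have : l = [] := by simpa [ABC] using hl
                  subst this
                  exact ⟨by simp, by simp⟩
                · rintro ⟨h1, _⟩
                  have : l = [] := List.length_eq_zero_iff.mp (Nat.le_zero.mp h1)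
                  simp [ABC, this]
              nodup := by simp [ABC]
              chain := by simp [ABC]
              head := rfl
              last := rfl }
  | h+1 => by
    obtain ⟨hA, hB, hC⟩ := good_ABC d hd2 h
    exact ⟨stepA hd2 hA hB, stepB hd2 hA hB hC, stepC hd2 hB hC⟩

end Step

end DT

namespace DT

open List

section Assemble

variable {d h : ℕ}

lemma valid_of_hv {b : Bool} {l : List ℕ} (hl : Hv d h l) : dtValid d h (b, l) := hl

lemma adj_of_rel {b : Bool} {x y : List ℕ} (hx : Hv d h x) (hy : Hv d h y)
    (hr : Rel d h x y) : (doubleTree d h).Adj (b, x) (b, y) := by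
  rw [doubleTree, SimpleGraph.fromRel_adj]
  rcases hr with ⟨a, rfl⟩ | ⟨a, rfl⟩ | ⟨h1, h2, h3⟩
  · refine ⟨?_, Or.inl ⟨valid_of_hv hx, valid_of_hv hy, Or.inl ⟨rfl, a, rfl⟩⟩⟩
    intro hc
    simp only [Prod.mk.injEq] at hc
    have := congrArg List.length hc.2
    simp at this
  · refine ⟨?_, Or.inr ⟨valid_of_hv hy, valid_of_hv hx, Or.inl ⟨rfl, a, rfl⟩⟩⟩
    intro hc
    simp only [Prod.mk.injEq] at hc
    have := congrArg List.length hc.2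
    simp at this
  · refine ⟨?_, Or.inl ⟨valid_of_hv hx, valid_of_hv hy, Or.inr (Or.inl ⟨rfl, h1, h2, h3⟩)⟩⟩
    intro hc
    simp only [Prod.mk.injEq] at hc
    rw [hc.2] at h3
    omega

lemma adj_cross (hd2 : 2 ≤ d) :
    (doubleTree d h).Adj (true, replicate h (d-1)) (false, replicate h (d-1)) := by
  rw [doubleTree, SimpleGraph.fromRel_adj]
  refine ⟨by simp, Or.inl ⟨?_, ?_, Or.inr (Or.inr ⟨rfl, rfl, by simp [dtLeaf],
    by simp [dtLeaf], Or.inl ⟨rfl, le_rfl⟩⟩)⟩⟩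
  · exact valid_of_hv ⟨by simp, by intro a ha; rw [List.eq_of_mem_replicate ha]; omega⟩
  · exact valid_of_hv ⟨by simp, by intro a ha; rw [List.eq_of_mem_replicate ha]; omega⟩

lemma chain'_of_mem {α : Type*} {R S : α → α → Prop} :
    ∀ {l : List α}, (∀ a ∈ l, ∀ b ∈ l, R a b → S a b) → l.IsChain R → l.IsChain S
  | [], _, _ => List.isChain_nil
  | [_], _, _ => by simp
  | a :: b :: l, hmem, hch => by
      rw [List.isChain_cons_cons] at hch ⊢
      exact ⟨hmem a (by simp) b (by simp) hch.1,
        chain'_of_mem (fun x hx y hy => hmem x (by simp [hx]) y (by simp [hy])) hch.2⟩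

lemma exists_walk {V : Type*} {G : SimpleGraph V} :
    ∀ (l : List V) (a b : V), l.head? = some a → l.getLast? = some b →
      l.IsChain G.Adj → ∃ w : G.Walk a b, w.support = l
  | [], a, b, ha, _, _ => by simp at ha
  | [x], a, b, ha, hb, _ => by
      simp only [List.head?_cons, Option.some.injEq] at ha
      simp only [List.getLast?_singleton, Option.some.injEq] at hb
      subst ha; subst hb
      exact ⟨SimpleGraph.Walk.nil, rfl⟩
  | x :: y :: l, a, b, ha, hb, hc => by
      simp only [List.head?_cons, Option.some.injEq] at ha
      subst ha
      rw [List.isChain_cons_cons] at hc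
      obtain ⟨w, hw⟩ := exists_walk (y :: l) y b rfl (by rwa [List.getLast?_cons_cons] at hb) hc.2
      exact ⟨SimpleGraph.Walk.cons hc.1 w, by simp [hw]⟩

end Assemble

end DT


/-- The double-tree of degree `d ≥ 2` and height `h` has a
Hamiltonian path from one root to the other. -/
theorem doubleTree_hamiltonianPath (d h : ℕ) (hd : 2 ≤ d) (hh : 1 ≤ h) :
    ∃ p : ((doubleTree d h).induce {p | dtValid d h p}).Walk
        ⟨(true, []), by constructor <;> simp⟩ ⟨(false, []), by constructor <;> simp⟩,
      p.IsHamiltonian := by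
  classical
  obtain ⟨hA, -, -⟩ := DT.good_ABC d hd h
  set L := (DT.ABC d h).1 with hLdef
  set S : List (Bool × List ℕ) :=
    L.map (fun l => (true, l)) ++ L.reverse.map (fun l => (false, l)) with hSdef
  have hvalid : ∀ p ∈ S, dtValid d h p := by
    intro p hp
    rcases List.mem_append.mp hp with hp | hp <;>
      simp only [List.mem_map, List.mem_reverse] at hp <;>
      obtain ⟨l, hl, rfl⟩ := hp <;>
      exact DT.valid_of_hv ((hA.mem l).mp hl)
  have hchain : S.IsChain (doubleTree d h).Adj := by
    refine List.IsChain.append ?_ ?_ ?_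
    · rw [List.isChain_map]
      refine DT.chain'_of_mem ?_ hA.chain
      intro a ha b hb hr
      exact DT.adj_of_rel ((hA.mem a).mp ha) ((hA.mem b).mp hb) hr
    · rw [List.isChain_map, List.isChain_reverse]
      refine DT.chain'_of_mem ?_ hA.chain
      intro a ha b hb hr
      exact (DT.adj_of_rel ((hA.mem a).mp ha) ((hA.mem b).mp hb) hr).symm
    · intro x hx y hy
      rw [List.getLast?_map, hA.last] at hx
      rw [List.head?_map, List.head?_reverse, hA.last] at hy
      simp only [Option.mem_def, Option.map_some, Option.some.injEq] at hx hy
      subst hx; subst hy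
      exact DT.adj_cross hd
  have hinj1 : Function.Injective (fun l : List ℕ => ((true, l) : Bool × List ℕ)) := by
    intro a b hab; simpa using hab
  have hinj2 : Function.Injective (fun l : List ℕ => ((false, l) : Bool × List ℕ)) := by
    intro a b hab; simpa using hab
  have hnodup : S.Nodup := by
    refine List.Nodup.append (hA.nodup.map hinj1)
      ((List.nodup_reverse.mpr hA.nodup).map hinj2) ?_
    intro x hx hy
    simp only [List.mem_map] at hx hy
    obtain ⟨l, -, rfl⟩ := hx
    obtain ⟨l', -, he⟩ := hy
    simp at he
  have hcover : ∀ p, dtValid d h p → p ∈ S := by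
    rintro ⟨b, l⟩ hp
    have hl : l ∈ L := (hA.mem l).mpr hp
    cases b
    · exact List.mem_append_right _ (List.mem_map.mpr ⟨l, List.mem_reverse.mpr hl, rfl⟩)
    · exact List.mem_append_left _ (List.mem_map.mpr ⟨l, hl, rfl⟩)
  have hhead : S.head? = some (true, []) := by
    rw [hSdef, List.head?_append, List.head?_map, hA.head]
    rfl
  have hlast : S.getLast? = some (false, []) := by
    rw [hSdef, List.getLast?_append, List.getLast?_map, List.getLast?_reverse, hA.head]
    rfl
  -- lift to the induced subgraph
  set G := (doubleTree d h).induce {p | dtValid d h p} with hGdef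
  let f : {x // x ∈ S} → {p | dtValid d h p} := fun x => ⟨x.val, hvalid x.val x.prop⟩
  set S' : List {p : Bool × List ℕ // dtValid d h p} := S.attach.map f with hS'def
  have hmapval : S'.map Subtype.val = S := by
    rw [hS'def, List.map_map]
    exact List.attach_map_subtype_val S
  have hchain' : S'.IsChain G.Adj := by
    rw [hS'def, List.isChain_map]
    have : S.IsChain (doubleTree d h).Adj := hchain
    rw [← List.attach_map_subtype_val S, List.isChain_map] at this
    exact this.imp (fun a b hab => hab)
  have hnodup' : S'.Nodup := List.Nodup.of_map Subtype.val (by rw [hmapval]; exact hnodup)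
  have hhead' : S'.head? = some ⟨(true, []), by constructor <;> simp⟩ := by
    have h1 : (S'.map Subtype.val).head? = some (true, []) := by rw [hmapval]; exact hhead
    rw [List.head?_map] at h1
    cases hS : S'.head? with
    | none => rw [hS] at h1; simp at h1
    | some x =>
      rw [hS] at h1
      simp only [Option.map_some, Option.some.injEq] at h1
      congr 1
      exact Subtype.ext h1
  have hlast' : S'.getLast? = some ⟨(false, []), by constructor <;> simp⟩ := by
    have h1 : (S'.map Subtype.val).getLast? = some (false, []) := by rw [hmapval]; exact hlast
    rw [List.getLast?_map] at h1
    cases hS : S'.getLast? with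
    | none => rw [hS] at h1; simp at h1
    | some x =>
      rw [hS] at h1
      simp only [Option.map_some, Option.some.injEq] at h1
      congr 1
      exact Subtype.ext h1
  obtain ⟨w, hw⟩ := DT.exists_walk S' _ _ hhead' hlast' hchain'
  refine ⟨w, ?_⟩
  intro v
  rw [hw]
  refine @List.count_eq_one_of_mem _ instBEqOfDecidableEq _ _ _ hnodup' ?_
  have hv : v.val ∈ S := hcover v.val v.prop
  rw [← hmapval, List.mem_map] at hv
  obtain ⟨u, hu, huv⟩ := hv
  have : u = v := Subtype.ext huv
  rwa [← this]
end

section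
/- The double-tree of degree d >= 2 and height h >= 2 is d-connected. -/
lemma dtOrd_append (d : ℕ) (l : List ℕ) (x : ℕ) :
    dtOrd d (l ++ [x]) = dtOrd d l * d + x := by
  simp [dtOrd]

lemma dtLeafList_succ (d h t : ℕ) :
    dtLeafList d (h+1) t = dtLeafList d h (t/d) ++ [t % d] := by
  unfold dtLeafList
  rw [List.range_succ, List.map_append]
  congr 1
  · apply List.map_congr_left
    intro i hi
    simp only [List.mem_range] at hi
    have h1 : h + 1 - 1 - i = (h - 1 - i) + 1 := by omega
    rw [h1, pow_succ, Nat.div_div_eq_div_mul, mul_comm]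
  · simp

lemma dtLeafList_length (d h t : ℕ) : (dtLeafList d h t).length = h := by
  simp [dtLeafList]

lemma dtLeafList_mem_lt (d h t : ℕ) (hd : 0 < d) :
    ∀ x ∈ dtLeafList d h t, x < d := by
  intro x hx
  simp only [dtLeafList, List.mem_map] at hx
  obtain ⟨i, _, rfl⟩ := hx
  exact Nat.mod_lt _ hd

lemma dtOrd_leafList (d : ℕ) (hd : 0 < d) :
    ∀ h t, t < d ^ h → dtOrd d (dtLeafList d h t) = t := by
  intro h
  induction h with
  | zero =>
    intro t ht
    simp only [pow_zero, Nat.lt_one_iff] at ht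
    subst ht
    simp [dtLeafList, dtOrd]
  | succ n ih =>
    intro t ht
    rw [dtLeafList_succ, dtOrd_append, ih (t/d) (by
      rw [Nat.div_lt_iff_lt_mul hd, ← pow_succ]; exact ht)]
    have := Nat.div_add_mod t d
    have h2 : t/d*d = d*(t/d) := Nat.mul_comm _ _
    omega

lemma leafList_ord (d : ℕ) (hd : 0 < d) :
    ∀ h (l : List ℕ), l.length = h → (∀ x ∈ l, x < d) →
      dtOrd d l < d ^ h ∧ dtLeafList d h (dtOrd d l) = l := by
  intro h
  induction h with
  | zero =>
    intro l hl _
    rw [List.length_eq_zero_iff] at hl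
    subst hl
    simp [dtOrd, dtLeafList]
  | succ n ih =>
    intro l hl hlt
    have hne : l ≠ [] := by intro hc; subst hc; simp at hl
    obtain ⟨l', x, hx⟩ : ∃ l' x, l = l' ++ [x] :=
      ⟨l.dropLast, l.getLast hne, (List.dropLast_append_getLast hne).symm⟩
    subst hx
    have hl' : l'.length = n := by simpa using hl
    have hlt' : ∀ y ∈ l', y < d := fun y hy => hlt y (by simp [hy])
    have hxd : x < d := hlt x (by simp)
    obtain ⟨hb, hll⟩ := ih l' hl' hlt'
    rw [dtOrd_append]
    constructor
    · have : dtOrd d l' * d + x < (dtOrd d l' + 1) * d := by nlinarith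
      calc dtOrd d l' * d + x < (dtOrd d l' + 1) * d := this
        _ ≤ d ^ n * d := by nlinarith
        _ = d ^ (n+1) := by ring
    · rw [dtLeafList_succ]
      have h1 : (dtOrd d l' * d + x) / d = dtOrd d l' := by
        rw [Nat.add_comm, Nat.add_mul_div_right _ _ hd, Nat.div_eq_of_lt hxd, Nat.zero_add]
      have h2 : (dtOrd d l' * d + x) % d = x := by
        rw [Nat.add_comm, Nat.add_mul_mod_self_right, Nat.mod_eq_of_lt hxd]
      rw [h1, h2, hll]


lemma div_mod_pair (d m a : ℕ) (hd : 0 < d) (ha : a < d) :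
    (m * d + a) / d = m ∧ (m * d + a) % d = a := by
  constructor
  · rw [Nat.add_comm, Nat.add_mul_div_right _ _ hd, Nat.div_eq_of_lt ha, Nat.zero_add]
  · rw [Nat.add_comm, Nat.add_mul_mod_self_right, Nat.mod_eq_of_lt ha]

lemma dtCross_of (d h s k : ℕ) (hd : 2 ≤ d) (hh : 1 ≤ h) (hs : s < d ^ h) (hk : k < d) :
    dtCross d h s ((s + k) % d ^ h) := by
  have hd0 : 0 < d := by omega
  have hLpos : 0 < d ^ h := Nat.pow_pos hd0
  have hhh : d ^ h = d ^ (h - 1) * d := by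
    conv_lhs => rw [show h = (h - 1) + 1 by omega]
    rw [pow_succ]
  set js := s / d with hjs
  set ns := s % d with hns
  have hsd : js * d + ns = s := by rw [hjs, hns, Nat.mul_comm]; exact Nat.div_add_mod s d
  have hnsd : ns < d := Nat.mod_lt _ hd0
  have hjsb : js < d ^ (h - 1) := by
    have : js * d + ns < d ^ (h-1) * d := by rw [hsd, ← hhh]; exact hs
    by_contra hc
    push_neg at hc
    nlinarith
  by_cases hcase : ns + k < d
  · -- same group
    have hslt : s + k < d ^ h := by
      have : s + k = js * d + (ns + k) := by omega
      rw [this, hhh]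
      nlinarith
    rw [Nat.mod_eq_of_lt hslt]
    have h2 := div_mod_pair d js (ns + k) hd0 hcase
    have he : js * d + (ns + k) = s + k := by omega
    rw [he] at h2
    left
    refine ⟨?_, ?_⟩ <;> omega
  · push_neg at hcase
    have hrep : s + k = (js + 1) * d + (ns + k - d) := by ring_nf; omega
    have hlt2 : ns + k - d < ns := by omega
    by_cases hlast : js + 1 < d ^ (h - 1)
    · have hslt : s + k < d ^ h := by
        rw [hrep, hhh]
        have : ns + k - d < d := by omega
        nlinarith
      rw [Nat.mod_eq_of_lt hslt]
      have h2 := div_mod_pair d (js + 1) (ns + k - d) hd0 (by omega)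
      rw [← hrep] at h2
      right; left
      refine ⟨?_, ?_⟩ <;> omega
    · have hje : js + 1 = d ^ (h - 1) := by omega
      have hrep2 : s + k = d ^ h + (ns + k - d) := by
        rw [hrep, hje, hhh]
      have hsm : (s + k) % d ^ h = ns + k - d := by
        rw [hrep2, Nat.add_mod_left, Nat.mod_eq_of_lt (by omega : ns + k - d < d ^ h)]
      right; right
      rw [hsm]
      refine ⟨by omega, ?_, ?_⟩
      · rw [Nat.div_eq_of_lt (by omega)]
      · rw [Nat.mod_eq_of_lt (by omega)]; omega

section DT
variable (d h : ℕ) (S : Set (Bool × List ℕ))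

/-- The surviving vertex set. -/
def dtW : Set (Bool × List ℕ) := {p | dtValid d h p} \ S

/-- Reachability between survivors in the induced graph. -/
def dtRch (p q : Bool × List ℕ) : Prop :=
  ∃ (hp : p ∈ dtW d h S) (hq : q ∈ dtW d h S),
    ((doubleTree d h).induce (dtW d h S)).Reachable ⟨p, hp⟩ ⟨q, hq⟩

variable {d h S}

lemma dtRch.refl {p : Bool × List ℕ} (hp : p ∈ dtW d h S) : dtRch d h S p p :=
  ⟨hp, hp, SimpleGraph.Reachable.refl _⟩

lemma dtRch.symm {p q : Bool × List ℕ} (hpq : dtRch d h S p q) : dtRch d h S q p := by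
  obtain ⟨hp, hq, hr⟩ := hpq
  exact ⟨hq, hp, hr.symm⟩

lemma dtRch.trans {p q r : Bool × List ℕ} (h1 : dtRch d h S p q) (h2 : dtRch d h S q r) :
    dtRch d h S p r := by
  obtain ⟨hp, hq, hr1⟩ := h1
  obtain ⟨hq', hr, hr2⟩ := h2
  refine ⟨hp, hr, hr1.trans ?_⟩
  convert hr2

lemma dtRch_of_adj {p q : Bool × List ℕ} (hp : p ∈ dtW d h S) (hq : q ∈ dtW d h S)
    (ha : (doubleTree d h).Adj p q) : dtRch d h S p q := by
  refine ⟨hp, hq, SimpleGraph.Adj.reachable ?_⟩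
  exact ha

lemma uLeaf_valid (hd : 0 < d) (t : ℕ) : dtValid d h (uLeaf d h t) :=
  ⟨by simp [uLeaf, dtLeafList_length], fun x hx => dtLeafList_mem_lt d h t hd x hx⟩

lemma vLeaf_valid (hd : 0 < d) (t : ℕ) : dtValid d h (vLeaf d h t) :=
  ⟨by simp [vLeaf, dtLeafList_length], fun x hx => dtLeafList_mem_lt d h t hd x hx⟩

lemma uLeaf_memW (hd : 0 < d) {t : ℕ} (ht : uLeaf d h t ∉ S) : uLeaf d h t ∈ dtW d h S :=
  ⟨uLeaf_valid hd t, ht⟩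

lemma vLeaf_memW (hd : 0 < d) {t : ℕ} (ht : vLeaf d h t ∉ S) : vLeaf d h t ∈ dtW d h S :=
  ⟨vLeaf_valid hd t, ht⟩

lemma uLeaf_inj (hd : 0 < d) {s t : ℕ} (hs : s < d ^ h) (ht : t < d ^ h)
    (he : uLeaf d h s = uLeaf d h t) : s = t := by
  have := congrArg (fun p => dtOrd d p.2) he
  simpa [uLeaf, dtOrd_leafList d hd h s hs, dtOrd_leafList d hd h t ht] using this

lemma vLeaf_inj (hd : 0 < d) {s t : ℕ} (hs : s < d ^ h) (ht : t < d ^ h)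
    (he : vLeaf d h s = vLeaf d h t) : s = t := by
  have := congrArg (fun p => dtOrd d p.2) he
  simpa [vLeaf, dtOrd_leafList d hd h s hs, dtOrd_leafList d hd h t ht] using this

lemma uLeaf_ne_vLeaf (s t : ℕ) : uLeaf d h s ≠ vLeaf d h t := by
  simp [uLeaf, vLeaf]

/-- Cross adjacency. -/
lemma adj_cross (hd : 2 ≤ d) (hh : 1 ≤ h) {s k : ℕ} (hs : s < d ^ h) (hk : k < d) :
    (doubleTree d h).Adj (uLeaf d h s) (vLeaf d h ((s + k) % d ^ h)) := by
  have hd0 : 0 < d := by omega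
  have hLpos : 0 < d ^ h := Nat.pow_pos hd0
  rw [doubleTree, SimpleGraph.fromRel_adj]
  refine ⟨uLeaf_ne_vLeaf _ _, Or.inl ⟨uLeaf_valid hd0 _, vLeaf_valid hd0 _, ?_⟩⟩
  right; right
  refine ⟨rfl, rfl, by simp [uLeaf, dtLeaf, dtLeafList_length],
    by simp [vLeaf, dtLeaf, dtLeafList_length], ?_⟩
  show dtCross d h (dtOrd d (dtLeafList d h s)) (dtOrd d (dtLeafList d h ((s + k) % d ^ h)))
  rw [dtOrd_leafList d hd0 h s hs, dtOrd_leafList d hd0 h _ (Nat.mod_lt _ hLpos)]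
  exact dtCross_of d h s k hd hh hs hk

/-- Tree (parent-child) adjacency. -/
lemma adj_child {b : Bool} {l : List ℕ} {a : ℕ}
    (hv : dtValid d h (b, l ++ [a])) : (doubleTree d h).Adj (b, l) (b, l ++ [a]) := by
  rw [doubleTree, SimpleGraph.fromRel_adj]
  constructor
  · intro hc
    have := congrArg (fun p => p.2.length) hc
    simp at this
  · left
    refine ⟨⟨?_, ?_⟩, hv, Or.inl ⟨rfl, a, rfl⟩⟩
    · have := hv.1; simp at this ⊢; omega
    · intro x hx; exact hv.2 x (by simp [hx])

end DT
lemma dt_lists_finite (d : ℕ) : ∀ h : ℕ, {l : List ℕ | l.length ≤ h ∧ ∀ x ∈ l, x < d}.Finite := by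
  intro h
  induction h with
  | zero =>
    apply Set.Finite.subset (Set.finite_singleton ([] : List ℕ))
    rintro l ⟨hl, -⟩
    simp only [Nat.le_zero, List.length_eq_zero_iff] at hl
    simp [hl]
  | succ n ih =>
    apply Set.Finite.subset
      (Set.Finite.insert ([] : List ℕ)
        (Set.Finite.image2 List.cons (Set.finite_Iio d) ih))
    rintro l ⟨hl, hlt⟩
    cases l with
    | nil => simp
    | cons a t =>
      right
      refine Set.mem_image2_of_mem ?_ ?_
      · exact hlt a (by simp)
      · exact ⟨by simpa using hl, fun x hx => hlt x (by simp [hx])⟩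

lemma dt_valid_finite (d h : ℕ) : {p : Bool × List ℕ | dtValid d h p}.Finite := by
  have : {p : Bool × List ℕ | dtValid d h p} ⊆
      (Set.univ : Set Bool) ×ˢ {l : List ℕ | l.length ≤ h ∧ ∀ x ∈ l, x < d} := by
    rintro ⟨b, l⟩ ⟨h1, h2⟩
    exact ⟨trivial, h1, h2⟩
  exact Set.Finite.subset (Set.Finite.prod Set.finite_univ (dt_lists_finite d h)) this

lemma dt_card_gt (d h : ℕ) (hd : 2 ≤ d) (hh : 2 ≤ h) :
    d < Set.ncard {p | dtValid d h p} := by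
  classical
  set F : Finset (Bool × List ℕ) :=
    insert (true, ([] : List ℕ)) ((Finset.range d).image fun a => (true, [a])) with hF
  have hinj : ∀ a ∈ Finset.range d, ∀ b ∈ Finset.range d,
      (fun a => ((true : Bool), [a])) a = (fun a => ((true : Bool), [a])) b → a = b := by
    intro a _ b _ hab
    simpa using hab
  have hcard : F.card = d + 1 := by
    rw [hF, Finset.card_insert_of_notMem (by simp), Finset.card_image_of_injOn hinj,
      Finset.card_range]
  have hsub : ↑F ⊆ {p : Bool × List ℕ | dtValid d h p} := by
    intro p hp
    simp only [hF, Finset.coe_insert, Set.mem_insert_iff, Finset.coe_image,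
      Set.mem_image, Finset.mem_coe, Finset.mem_range] at hp
    rcases hp with rfl | ⟨a, ha, rfl⟩
    · exact ⟨by simp, by simp⟩
    · exact ⟨by simp; omega, by simpa using ha⟩
  have := Set.ncard_le_ncard hsub (dt_valid_finite d h)
  rw [Set.ncard_coe_finset, hcard] at this
  omega

/-- Existence of a clean block of `d` consecutive leaf indices. -/
lemma clean_block (d h : ℕ) (S : Set (Bool × List ℕ)) (hd : 2 ≤ d) (hh : 2 ≤ h)
    (hfin : S.Finite) (hcard : S.ncard < d) :
    ∃ k0, k0 + d ≤ d ^ h ∧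
      ∀ c < d, uLeaf d h (k0 + c) ∉ S ∧ vLeaf d h (k0 + c) ∉ S := by
  classical
  have hd0 : 0 < d := by omega
  set T : Finset ℕ := hfin.toFinset.image (fun p => dtOrd d p.2 / d) with hT
  have hTcard : T.card < d ^ (h - 1) := by
    have h1 : T.card ≤ hfin.toFinset.card := Finset.card_image_le
    have h2 : hfin.toFinset.card = S.ncard := (Set.ncard_eq_toFinset_card S hfin).symm
    have h3 : d ≤ d ^ (h - 1) := by
      calc d = d ^ 1 := (pow_one d).symm
        _ ≤ d ^ (h - 1) := Nat.pow_le_pow_right hd0 (by omega)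
    omega
  have : ¬ (Finset.range (d ^ (h - 1)) ⊆ T) := by
    intro hc
    have := Finset.card_le_card hc
    simp only [Finset.card_range] at this
    omega
  obtain ⟨j, hj1, hj2⟩ := Finset.not_subset.mp this
  rw [Finset.mem_range] at hj1
  have e3 : d ^ (h - 1) * d = d ^ h := by rw [← pow_succ]; congr 1; omega
  have e2 : (j + 1) * d ≤ d ^ (h - 1) * d := Nat.mul_le_mul_right d hj1
  have e1 : (j + 1) * d = j * d + d := by ring
  refine ⟨j * d, by omega, ?_⟩
  · intro c hc
    have hlt : j * d + c < d ^ h := by omega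
    have hdiv : (j * d + c) / d = j := (div_mod_pair d j c hd0 hc).1
    constructor
    · intro hmem
      apply hj2
      rw [hT, Finset.mem_image]
      refine ⟨uLeaf d h (j * d + c), by simpa using hmem, ?_⟩
      show dtOrd d (dtLeafList d h (j * d + c)) / d = j
      rw [dtOrd_leafList d hd0 h _ hlt, hdiv]
    · intro hmem
      apply hj2
      rw [hT, Finset.mem_image]
      refine ⟨vLeaf d h (j * d + c), by simpa using hmem, ?_⟩
      show dtOrd d (dtLeafList d h (j * d + c)) / d = j
      rw [dtOrd_leafList d hd0 h _ hlt, hdiv]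

/-- Descent to a leaf inside one half, avoiding `S`. -/
lemma dt_descend (d h : ℕ) (S : Set (Bool × List ℕ)) (hd : 2 ≤ d)
    (hfin : S.Finite) (hcard : S.ncard < d) :
    ∀ (n : ℕ) (b : Bool) (l : List ℕ), h - l.length ≤ n → dtValid d h (b, l) → (b, l) ∉ S →
      ∃ m : List ℕ, m.length = h ∧ dtValid d h (b, m) ∧ (b, m) ∉ S ∧
        dtRch d h S (b, l) (b, m) := by
  classical
  intro n
  induction n with
  | zero =>
    intro b l hn hv hns
    refine ⟨l, ?_, hv, hns, dtRch.refl ⟨hv, hns⟩⟩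
    have := hv.1
    simp only at this
    omega
  | succ n ih =>
    intro b l hn hv hns
    by_cases hlen : l.length = h
    · exact ⟨l, hlen, hv, hns, dtRch.refl ⟨hv, hns⟩⟩
    · have hlenlt : l.length < h := lt_of_le_of_ne hv.1 hlen
      -- find a child not in S
      have hex : ∃ a, a < d ∧ (b, l ++ [a]) ∉ S := by
        by_contra hc
        push_neg at hc
        have hsub : (Finset.range d).image (fun a => (b, l ++ [a])) ⊆ hfin.toFinset := by
          intro p hp
          rw [Finset.mem_image] at hp
          obtain ⟨a, ha, rfl⟩ := hp
          rw [Set.Finite.mem_toFinset]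
          exact hc a (Finset.mem_range.mp ha)
        have hinj : ∀ a ∈ Finset.range d, ∀ a' ∈ Finset.range d,
            (fun a => (b, l ++ [a])) a = (fun a => (b, l ++ [a])) a' → a = a' := by
          intro a _ a' _ hae
          simpa using hae
        have := Finset.card_le_card hsub
        rw [Finset.card_image_of_injOn hinj, Finset.card_range,
          ← Set.ncard_eq_toFinset_card S hfin] at this
        omega
      obtain ⟨a, ha, hans⟩ := hex
      have hvc : dtValid d h (b, l ++ [a]) := by
        constructor
        · simp only [List.length_append, List.length_singleton]
          omega
        · intro x hx
          simp only [List.mem_append, List.mem_singleton] at hx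
          rcases hx with hx | rfl
          · exact hv.2 x hx
          · exact ha
      obtain ⟨m, hm1, hm2, hm3, hm4⟩ := ih b (l ++ [a])
        (by simp only [List.length_append, List.length_singleton]; omega) hvc hans
      refine ⟨m, hm1, hm2, hm3, dtRch.trans ?_ hm4⟩
      exact dtRch_of_adj ⟨hv, hns⟩ ⟨hvc, hans⟩ (adj_child hvc)
/-- The main leaf-level connectivity lemma: every surviving leaf is connected
to the hub leaf `uLeaf k0` at the start of the clean block. -/
lemma leaf_main (d h : ℕ) (S : Set (Bool × List ℕ)) (hd : 2 ≤ d) (hh : 2 ≤ h)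
    (hfin : S.Finite) (hcard : S.ncard < d) (k0 : ℕ) (hk0 : k0 + d ≤ d ^ h)
    (hclean : ∀ c < d, uLeaf d h (k0 + c) ∉ S ∧ vLeaf d h (k0 + c) ∉ S) :
    ∀ t < d ^ h, (uLeaf d h t ∉ S → dtRch d h S (uLeaf d h t) (uLeaf d h k0)) ∧
      (vLeaf d h t ∉ S → dtRch d h S (vLeaf d h t) (uLeaf d h k0)) := by
  classical
  have hd0 : 0 < d := by omega
  have hh1 : 1 ≤ h := by omega
  set L := d ^ h with hL
  have hL0 : 0 < L := Nat.pow_pos hd0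
  have hdL : d ≤ L := by omega
  set U : ℕ → Bool × List ℕ := fun i => uLeaf d h ((k0 + i) % L) with hU
  set V : ℕ → Bool × List ℕ := fun i => vLeaf d h ((k0 + i) % L) with hV
  -- cancellation
  have hUcan : ∀ a b, U a = U b → a % L = b % L := by
    intro a b he
    have h2 : (k0 + a) % L = (k0 + b) % L :=
      uLeaf_inj hd0 (Nat.mod_lt _ hL0) (Nat.mod_lt _ hL0) he
    exact Nat.ModEq.add_left_cancel' k0 h2
  have hVcan : ∀ a b, V a = V b → a % L = b % L := by
    intro a b he
    have h2 : (k0 + a) % L = (k0 + b) % L :=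
      vLeaf_inj hd0 (Nat.mod_lt _ hL0) (Nat.mod_lt _ hL0) he
    exact Nat.ModEq.add_left_cancel' k0 h2
  have hUV : ∀ a b, U a ≠ V b := fun a b => uLeaf_ne_vLeaf _ _
  -- periodicity
  have hUper : ∀ n, U (n + L) = U n := by
    intro n
    show uLeaf d h ((k0 + (n + L)) % L) = uLeaf d h ((k0 + n) % L)
    congr 1
    rw [← Nat.add_assoc, Nat.add_mod_right]
  have hVper : ∀ n, V (n + L) = V n := by
    intro n
    show vLeaf d h ((k0 + (n + L)) % L) = vLeaf d h ((k0 + n) % L)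
    congr 1
    rw [← Nat.add_assoc, Nat.add_mod_right]
  have hUmod : ∀ n, U (n % L) = U n := by
    intro n
    show uLeaf d h ((k0 + n % L) % L) = uLeaf d h ((k0 + n) % L)
    congr 1
    exact Nat.add_mod_mod k0 n L
  have hVmod : ∀ n, V (n % L) = V n := by
    intro n
    show vLeaf d h ((k0 + n % L) % L) = vLeaf d h ((k0 + n) % L)
    congr 1
    exact Nat.add_mod_mod k0 n L
  -- adjacency
  have hadj : ∀ i k, k < d → (doubleTree d h).Adj (U i) (V (i + k)) := by
    intro i k hk
    have h1 := adj_cross hd hh1 (Nat.mod_lt (k0 + i) hL0 : (k0 + i) % L < L) hk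
    have h2 : ((k0 + i) % L + k) % L = (k0 + (i + k)) % L := by
      rw [Nat.mod_add_mod, Nat.add_assoc]
    rw [h2] at h1
    exact h1
  -- membership
  have hmemU : ∀ {i : ℕ}, U i ∉ S → U i ∈ dtW d h S := fun hi => uLeaf_memW hd0 hi
  have hmemV : ∀ {i : ℕ}, V i ∉ S → V i ∈ dtW d h S := fun hi => vLeaf_memW hd0 hi
  -- cleanliness of the block in U/V form
  have hcleanU : ∀ c < d, U c ∉ S := by
    intro c hc
    show uLeaf d h ((k0 + c) % L) ∉ S
    rw [Nat.mod_eq_of_lt (by omega)]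
    exact (hclean c hc).1
  have hcleanV : ∀ c < d, V c ∉ S := by
    intro c hc
    show vLeaf d h ((k0 + c) % L) ∉ S
    rw [Nat.mod_eq_of_lt (by omega)]
    exact (hclean c hc).2
  -- the hub
  have hU0 : U 0 = uLeaf d h k0 := by
    show uLeaf d h ((k0 + 0) % L) = uLeaf d h k0
    congr 1
    rw [Nat.add_zero, Nat.mod_eq_of_lt (by omega)]
  -- block connectivity
  have hblockV : ∀ c < d, dtRch d h S (V c) (U 0) := by
    intro c hc
    have ha : (doubleTree d h).Adj (U 0) (V c) := by
      have := hadj 0 c hc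
      rwa [Nat.zero_add] at this
    exact (dtRch_of_adj (hmemU (hcleanU 0 hd0)) (hmemV (hcleanV c hc)) ha).symm
  have hblockU : ∀ c < d, dtRch d h S (U c) (U 0) := by
    intro c hc
    have ha : (doubleTree d h).Adj (U c) (V (d - 1)) := by
      have := hadj c (d - 1 - c) (by omega)
      rwa [show c + (d - 1 - c) = d - 1 by omega] at this
    exact (dtRch_of_adj (hmemU (hcleanU c hc)) (hmemV (hcleanV (d-1) (by omega))) ha).trans
      (hblockV (d - 1) (by omega))
  -- closure of badness
  have hclosU : ∀ i j, (doubleTree d h).Adj (U i) (V j) → U i ∉ S → V j ∉ S →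
      ¬ dtRch d h S (U i) (U 0) → ¬ dtRch d h S (V j) (U 0) := by
    intro i j ha hi hj hni hrj
    exact hni ((dtRch_of_adj (hmemU hi) (hmemV hj) ha).trans hrj)
  have hclosV : ∀ i j, (doubleTree d h).Adj (U i) (V j) → U i ∉ S → V j ∉ S →
      ¬ dtRch d h S (V j) (U 0) → ¬ dtRch d h S (U i) (U 0) := by
    intro i j ha hi hj hnj hri
    exact hnj (((dtRch_of_adj (hmemU hi) (hmemV hj) ha).symm).trans hri)
  -- counting: a full dead window of d consecutive indices is impossible
  have hcount : ∀ (g : ℕ → Bool × List ℕ), (∀ a b, g a = g b → a % L = b % L) →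
      ∀ x, (∀ k < d, g (x + k) ∈ S) → False := by
    intro g ginj x hall
    have hsub : (Finset.range d).image (fun k => g (x + k)) ⊆ hfin.toFinset := by
      intro p hp
      rw [Finset.mem_image] at hp
      obtain ⟨k, hk, rfl⟩ := hp
      rw [Set.Finite.mem_toFinset]
      exact hall k (Finset.mem_range.mp hk)
    have hinj : ∀ a ∈ Finset.range d, ∀ b ∈ Finset.range d,
        (fun k => g (x + k)) a = (fun k => g (x + k)) b → a = b := by
      intro a ha b hb he
      have h1 : (x + a) % L = (x + b) % L := ginj _ _ he
      have h2 : a % L = b % L := Nat.ModEq.add_left_cancel' x h1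
      rw [Finset.mem_range] at ha hb
      rwa [Nat.mod_eq_of_lt (by omega), Nat.mod_eq_of_lt (by omega)] at h2
    have := Finset.card_le_card hsub
    rw [Finset.card_image_of_injOn hinj, Finset.card_range,
      ← Set.ncard_eq_toFinset_card S hfin] at this
    omega
  -- the main claim
  have claim : ∀ i < L, (U i ∉ S → dtRch d h S (U i) (U 0)) ∧
      (V i ∉ S → dtRch d h S (V i) (U 0)) := by
    by_contra hbad
    push_neg at hbad
    obtain ⟨i0, hi0L, hfail0⟩ := hbad
    have hfail : (U i0 ∉ S ∧ ¬ dtRch d h S (U i0) (U 0)) ∨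
        (V i0 ∉ S ∧ ¬ dtRch d h S (V i0) (U 0)) := by tauto
    set BadU : Finset ℕ :=
      (Finset.range L).filter (fun n => U n ∉ S ∧ ¬ dtRch d h S (U n) (U 0)) with hBadU
    set BadV : Finset ℕ :=
      (Finset.range L).filter (fun n => V n ∉ S ∧ ¬ dtRch d h S (V n) (U 0)) with hBadV
    have hBadU_mem : ∀ n, n ∈ BadU ↔ n < L ∧ U n ∉ S ∧ ¬ dtRch d h S (U n) (U 0) := by
      intro n
      simp [hBadU, Finset.mem_filter, Finset.mem_range]
    have hBadV_mem : ∀ n, n ∈ BadV ↔ n < L ∧ V n ∉ S ∧ ¬ dtRch d h S (V n) (U 0) := by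
      intro n
      simp [hBadV, Finset.mem_filter, Finset.mem_range]
    have hBadU_of : ∀ n, U n ∉ S → ¬ dtRch d h S (U n) (U 0) → n % L ∈ BadU := by
      intro n h1 h2
      rw [hBadU_mem]
      rw [← hUmod n] at h1 h2
      exact ⟨Nat.mod_lt _ hL0, h1, h2⟩
    have hBadV_of : ∀ n, V n ∉ S → ¬ dtRch d h S (V n) (U 0) → n % L ∈ BadV := by
      intro n h1 h2
      rw [hBadV_mem]
      rw [← hVmod n] at h1 h2
      exact ⟨Nat.mod_lt _ hL0, h1, h2⟩
    have hBadU_nb : ∀ n ∈ BadU, d ≤ n := by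
      intro n hn
      rw [hBadU_mem] at hn
      by_contra hc
      exact hn.2.2 (hblockU n (by omega))
    have hBadV_nb : ∀ n ∈ BadV, d ≤ n := by
      intro n hn
      rw [hBadV_mem] at hn
      by_contra hc
      exact hn.2.2 (hblockV n (by omega))
    -- BadU is nonempty
    have hBUne : BadU.Nonempty := by
      rcases hfail with ⟨h1, h2⟩ | ⟨h1, h2⟩
      · exact ⟨i0 % L, hBadU_of i0 h1 h2⟩
      · -- find a live upper neighbour behind V i0
        have hex : ∃ k < d, U (i0 + L - k) ∉ S := by
          by_contra hc
          push_neg at hc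
          apply hcount U hUcan (i0 + L - (d - 1))
          intro k hk
          have he : i0 + L - (d - 1) + k = i0 + L - (d - 1 - k) := by omega
          rw [he]
          exact hc (d - 1 - k) (by omega)
        obtain ⟨k, hk, hku⟩ := hex
        have ha : (doubleTree d h).Adj (U (i0 + L - k)) (V i0) := by
          have := hadj (i0 + L - k) k hk
          rwa [show i0 + L - k + k = i0 + L by omega, hVper] at this
        have hnr : ¬ dtRch d h S (U (i0 + L - k)) (U 0) := hclosV _ _ ha hku h1 h2
        exact ⟨(i0 + L - k) % L, hBadU_of _ hku hnr⟩
    set istar := BadU.max' hBUne with histar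
    have histar_mem := BadU.max'_mem hBUne
    rw [hBadU_mem] at histar_mem
    obtain ⟨histarL, histarS, histarR⟩ := histar_mem
    have histar_max : ∀ n, U n ∉ S → ¬ dtRch d h S (U n) (U 0) → n % L ≤ istar :=
      fun n h1 h2 => BadU.le_max' _ (hBadU_of n h1 h2)
    -- live lower neighbour in front of U istar
    set Bset := (Finset.range d).filter (fun k => V (istar + k) ∉ S) with hBset
    have hBsetne : Bset.Nonempty := by
      by_contra hc
      rw [Finset.not_nonempty_iff_eq_empty] at hc
      apply hcount V hVcan istar
      intro k hk
      by_contra hx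
      have : k ∈ Bset := by
        rw [hBset, Finset.mem_filter, Finset.mem_range]
        exact ⟨hk, hx⟩
      rw [hc] at this
      exact absurd this (Finset.notMem_empty k)
    set bstar := Bset.max' hBsetne with hbstar
    have hbstar_mem := Bset.max'_mem hBsetne
    rw [Finset.mem_filter, Finset.mem_range] at hbstar_mem
    obtain ⟨hbstard, hbstarS⟩ := hbstar_mem
    have hbstar_max : ∀ k < d, V (istar + k) ∉ S → k ≤ bstar := by
      intro k h1 h2
      apply Bset.le_max'
      rw [hBset, Finset.mem_filter, Finset.mem_range]
      exact ⟨h1, h2⟩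
    -- V (istar + bstar) is bad
    have hVbad : ¬ dtRch d h S (V (istar + bstar)) (U 0) :=
      hclosU _ _ (hadj istar bstar hbstard) histarS hbstarS histarR
    have hwV : (istar + bstar) % L ∈ BadV := hBadV_of _ hbstarS hVbad
    have hnw1 : istar + bstar < L := by
      by_contra hc
      push_neg at hc
      have h1 : (istar + bstar) % L = istar + bstar - L := by
        rw [Nat.mod_eq_sub_mod hc, Nat.mod_eq_of_lt (by omega)]
      have := hBadV_nb _ hwV
      omega
    have hwV' : istar + bstar ∈ BadV := by
      rwa [Nat.mod_eq_of_lt hnw1] at hwV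
    have hBVne : BadV.Nonempty := ⟨_, hwV'⟩
    set jstar := BadV.min' hBVne with hjstar
    have hjstar_mem := BadV.min'_mem hBVne
    rw [hBadV_mem] at hjstar_mem
    obtain ⟨hjstarL, hjstarS, hjstarR⟩ := hjstar_mem
    have hjstar_min : ∀ n, V n ∉ S → ¬ dtRch d h S (V n) (U 0) → jstar ≤ n % L :=
      fun n h1 h2 => BadV.min'_le _ (hBadV_of n h1 h2)
    have hjstar_d : d ≤ jstar := hBadV_nb _ (BadV.min'_mem hBVne)
    have hjib : jstar ≤ istar + bstar := BadV.min'_le _ hwV'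
    -- live upper neighbour behind V jstar
    set Aset := (Finset.range d).filter (fun k => U (jstar + L - k) ∉ S) with hAset
    have hAsetne : Aset.Nonempty := by
      by_contra hc
      rw [Finset.not_nonempty_iff_eq_empty] at hc
      apply hcount U hUcan (jstar + L - (d - 1))
      intro k hk
      by_contra hx
      have he : jstar + L - (d - 1) + k = jstar + L - (d - 1 - k) := by omega
      rw [he] at hx
      have : d - 1 - k ∈ Aset := by
        rw [hAset, Finset.mem_filter, Finset.mem_range]
        exact ⟨by omega, hx⟩
      rw [hc] at this
      exact absurd this (Finset.notMem_empty _)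
    set astar := Aset.max' hAsetne with hastar
    have hastar_mem := Aset.max'_mem hAsetne
    rw [Finset.mem_filter, Finset.mem_range] at hastar_mem
    obtain ⟨hastard, hastarS⟩ := hastar_mem
    have hastar_max : ∀ k < d, U (jstar + L - k) ∉ S → k ≤ astar := by
      intro k h1 h2
      apply Aset.le_max'
      rw [hAset, Finset.mem_filter, Finset.mem_range]
      exact ⟨h1, h2⟩
    -- U (jstar + L - astar) is bad
    have hUbad : ¬ dtRch d h S (U (jstar + L - astar)) (U 0) := by
      apply hclosV _ _ ?_ hastarS hjstarS hjstarR
      have := hadj (jstar + L - astar) astar hastard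
      rwa [show jstar + L - astar + astar = jstar + L by omega, hVper] at this
    have hwU : (jstar + L - astar) % L ∈ BadU := hBadU_of _ hastarS hUbad
    have hmodja : (jstar + L - astar) % L = jstar - astar := by
      rw [show jstar + L - astar = (jstar - astar) + L by omega, Nat.add_mod_right,
        Nat.mod_eq_of_lt (by omega)]
    have hwU' : jstar - astar ∈ BadU := by rwa [hmodja] at hwU
    have hja_le : jstar - astar ≤ istar := BadU.le_max' _ hwU'
    have hja_d : d ≤ jstar - astar := hBadU_nb _ hwU'
    -- the four families of forced kills
    have F1 : ∀ c, 1 ≤ c → c ≤ bstar → U (istar + c) ∈ S := by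
      intro c h1 h2
      by_contra hx
      have ha : (doubleTree d h).Adj (U (istar + c)) (V (istar + bstar)) := by
        have := hadj (istar + c) (bstar - c) (by omega)
        rwa [show istar + c + (bstar - c) = istar + bstar by omega] at this
      have hnr : ¬ dtRch d h S (U (istar + c)) (U 0) :=
        hclosV _ _ ha hx hbstarS hVbad
      have := histar_max _ hx hnr
      rw [Nat.mod_eq_of_lt (by omega : istar + c < L)] at this
      omega
    have F2 : ∀ c, bstar < c → c < d → V (istar + c) ∈ S := by
      intro c h1 h2
      by_contra hx
      have := hbstar_max c h2 hx
      omega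
    have G1 : ∀ c, 1 ≤ c → c ≤ astar → V (jstar + L - c) ∈ S := by
      intro c h1 h2
      by_contra hx
      have ha : (doubleTree d h).Adj (U (jstar + L - astar)) (V (jstar + L - c)) := by
        have := hadj (jstar + L - astar) (astar - c) (by omega)
        rwa [show jstar + L - astar + (astar - c) = jstar + L - c by omega] at this
      have hnr : ¬ dtRch d h S (V (jstar + L - c)) (U 0) :=
        hclosU _ _ ha hastarS hx hUbad
      have := hjstar_min _ hx hnr
      rw [show jstar + L - c = (jstar - c) + L by omega, Nat.add_mod_right,
        Nat.mod_eq_of_lt (by omega)] at this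
      omega
    have G2 : ∀ c, astar < c → c < d → U (jstar + L - c) ∈ S := by
      intro c h1 h2
      by_contra hx
      have := hastar_max c h2 hx
      omega
    -- no wrap for the forward window
    have hnw2 : istar + d ≤ L := by
      by_contra hcc
      push_neg at hcc
      have hc1 : 1 ≤ L - istar := by omega
      have hc2 : L - istar < d := by omega
      have hc3 : istar + (L - istar) = L := by omega
      by_cases hcb : L - istar ≤ bstar
      · have := F1 (L - istar) hc1 hcb
        rw [hc3] at this
        have h9 : U L = U 0 := by
          have := hUper 0
          rwa [Nat.zero_add] at this
        rw [h9] at this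
        exact (hcleanU 0 hd0) this
      · have := F2 (L - istar) (by omega) hc2
        rw [hc3] at this
        have h9 : V L = V 0 := by
          have := hVper 0
          rwa [Nat.zero_add] at this
        rw [h9] at this
        exact (hcleanV 0 hd0) this
    -- reduced forms of the backward kills
    have G1' : ∀ c, 1 ≤ c → c ≤ astar → V (jstar - c) ∈ S := by
      intro c h1 h2
      have := G1 c h1 h2
      have h9 := hVper (jstar - c)
      rw [show jstar - c + L = jstar + L - c by omega] at h9
      rwa [h9] at this
    have G2' : ∀ c, astar < c → c < d → U (jstar - c) ∈ S := by
      intro c h1 h2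
      have := G2 c h1 h2
      have h9 := hUper (jstar - c)
      rw [show jstar - c + L = jstar + L - c by omega] at h9
      rwa [h9] at this
    -- strict injectivity helpers
    have hUeq : ∀ a b, a < L → b < L → U a = U b → a = b := by
      intro a b ha hb he
      have := hUcan a b he
      rwa [Nat.mod_eq_of_lt ha, Nat.mod_eq_of_lt hb] at this
    have hVeq : ∀ a b, a < L → b < L → V a = V b → a = b := by
      intro a b ha hb he
      have := hVcan a b he
      rwa [Nat.mod_eq_of_lt ha, Nat.mod_eq_of_lt hb] at this
    -- assemble 2d-2 distinct elements of S
    set kill : ℕ → Bool × List ℕ := fun c =>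
      if c < d then (if c ≤ bstar then U (istar + c) else V (istar + c))
      else (if c - d + 1 ≤ astar then V (jstar - (c - d + 1)) else U (jstar - (c - d + 1)))
      with hkill
    have hkillS : ∀ c ∈ Finset.Icc 1 (2 * d - 2), kill c ∈ S := by
      intro c hc
      rw [Finset.mem_Icc] at hc
      simp only [hkill]
      by_cases h1 : c < d
      · rw [if_pos h1]
        by_cases h2 : c ≤ bstar
        · rw [if_pos h2]; exact F1 c hc.1 h2
        · rw [if_neg h2]; exact F2 c (by omega) h1
      · rw [if_neg h1]
        by_cases h2 : c - d + 1 ≤ astar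
        · rw [if_pos h2]; exact G1' _ (by omega) h2
        · rw [if_neg h2]; exact G2' _ (by omega) (by omega)
    have hinj : Set.InjOn kill ↑(Finset.Icc 1 (2 * d - 2)) := by
      intro c1 hc1 c2 hc2 he
      simp only [Finset.coe_Icc, Set.mem_Icc] at hc1 hc2
      simp only [hkill] at he
      split_ifs at he <;>
        first
          | exact absurd he (hUV _ _)
          | exact absurd he.symm (hUV _ _)
          | (have h9 := hUeq _ _ (by omega) (by omega) he; omega)
          | (have h9 := hVeq _ _ (by omega) (by omega) he; omega)
    have hsub : (Finset.Icc 1 (2 * d - 2)).image kill ⊆ hfin.toFinset := by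
      intro p hp
      rw [Finset.mem_image] at hp
      obtain ⟨c, hc, rfl⟩ := hp
      rw [Set.Finite.mem_toFinset]
      exact hkillS c hc
    have hfin2 := Finset.card_le_card hsub
    rw [Finset.card_image_of_injOn hinj, Nat.card_Icc,
      ← Set.ncard_eq_toFinset_card S hfin] at hfin2
    omega
  -- conclude from the claim
  intro t ht
  have hiL : (t + (L - k0)) % L < L := Nat.mod_lt _ hL0
  have hkey : (k0 + (t + (L - k0)) % L) % L = t := by
    rw [Nat.add_mod_mod, show k0 + (t + (L - k0)) = t + L by omega,
      Nat.add_mod_right, Nat.mod_eq_of_lt ht]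
  have hUt : U ((t + (L - k0)) % L) = uLeaf d h t := by
    show uLeaf d h ((k0 + (t + (L - k0)) % L) % L) = uLeaf d h t
    rw [hkey]
  have hVt : V ((t + (L - k0)) % L) = vLeaf d h t := by
    show vLeaf d h ((k0 + (t + (L - k0)) % L) % L) = vLeaf d h t
    rw [hkey]
  have := claim _ hiL
  rw [hUt, hVt, hU0] at this
  exact this
/-- Every survivor is connected (in the induced graph) to the hub leaf. -/
lemma dt_to_hub (d h : ℕ) (S : Set (Bool × List ℕ)) (hd : 2 ≤ d) (hh : 2 ≤ h)
    (hfin : S.Finite) (hcard : S.ncard < d) (k0 : ℕ) (hk0 : k0 + d ≤ d ^ h)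
    (hclean : ∀ c < d, uLeaf d h (k0 + c) ∉ S ∧ vLeaf d h (k0 + c) ∉ S)
    (b : Bool) (l : List ℕ) (hmem : (b, l) ∈ dtW d h S) :
    dtRch d h S (b, l) (uLeaf d h k0) := by
  have hd0 : 0 < d := by omega
  obtain ⟨hvalid, hnotS⟩ := hmem
  obtain ⟨m, hm1, hm2, hm3, hm4⟩ :=
    dt_descend d h S hd hfin hcard h b l (by omega) hvalid hnotS
  obtain ⟨hordlt, hordeq⟩ := leafList_ord d hd0 h m hm1 (fun x hx => hm2.2 x hx)
  have hmain := leaf_main d h S hd hh hfin hcard k0 hk0 hclean (dtOrd d m) hordlt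
  cases b with
  | true =>
    have he : (true, m) = uLeaf d h (dtOrd d m) := by
      rw [uLeaf, hordeq]
    refine hm4.trans ?_
    rw [he]
    exact hmain.1 (by rwa [← he])
  | false =>
    have he : (false, m) = vLeaf d h (dtOrd d m) := by
      rw [vLeaf, hordeq]
    refine hm4.trans ?_
    rw [he]
    exact hmain.2 (by rwa [← he])

/-- The double-tree of degree `d ≥ 2` and height `h ≥ 2` is
`d`-connected: it has more than `d` vertices and deleting any set of fewer
than `d` vertices leaves it connected. -/
theorem doubleTree_d_connected (d h : ℕ) (hd : 2 ≤ d) (hh : 2 ≤ h) :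
    d < Set.ncard {p | dtValid d h p} ∧
    ∀ S : Set (Bool × List ℕ), S.Finite → S.ncard < d →
      ((doubleTree d h).induce ({p | dtValid d h p} \ S)).Connected := by
  have hd0 : 0 < d := by omega
  constructor
  · exact dt_card_gt d h hd hh
  · intro S hfin hcard
    obtain ⟨k0, hk0, hclean⟩ := clean_block d h S hd hh hfin hcard
    have hhubS : uLeaf d h k0 ∉ S := by
      have := (hclean 0 hd0).1
      rwa [Nat.add_zero] at this
    have hhub : uLeaf d h k0 ∈ dtW d h S := uLeaf_memW hd0 hhubS
    rw [SimpleGraph.connected_iff]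
    refine ⟨?_, ⟨⟨uLeaf d h k0, hhub⟩⟩⟩
    rintro ⟨⟨b1, l1⟩, hx⟩ ⟨⟨b2, l2⟩, hy⟩
    have h1 := dt_to_hub d h S hd hh hfin hcard k0 hk0 hclean b1 l1 hx
    have h2 := dt_to_hub d h S hd hh hfin hcard k0 hk0 hclean b2 l2 hy
    obtain ⟨hp1, hq1, hr1⟩ := h1
    obtain ⟨hp2, hq2, hr2⟩ := h2
    exact hr1.trans hr2.symm
end

section
/- Let G be a graph on which, under optimal Tron play, Bob's score is at least Alice's score (Bob achieves at least a tie). Let F be G plus a universal vertex v. Then in the Tron game on F, if Alice starts at v, Bob's first move lands on some vertex of G, Alice's reply can be any remaining vertex of G, and thereafter the game is exactly the Tron game on G with roles exchanged; consequently Alice achieves at least a tie on F. -/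
/-- `G` together with a new universal vertex (`none`) adjacent to everything. -/
def addUniversal {V : Type} (G : SimpleGraph V) : SimpleGraph (Option V) :=
  SimpleGraph.fromRel (fun x y =>
    match x, y with
    | none, some _ => True
    | some a, some b => G.Adj a b
    | _, _ => False)

section AuxTron

variable {V : Type} [DecidableEq V]

lemma addUniversal_adj_some_some (G : SimpleGraph V) (a b : V) :
    (addUniversal G).Adj (some a) (some b) ↔ G.Adj a b := by
  constructor
  · intro h
    rw [addUniversal, SimpleGraph.fromRel_adj] at h
    rcases h with ⟨-, h | h⟩
    · exact h
    · exact h.symm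
  · intro h
    rw [addUniversal, SimpleGraph.fromRel_adj]
    exact ⟨by simpa using G.ne_of_adj h, Or.inl h⟩

lemma addUniversal_adj_none (G : SimpleGraph V) (a : V) :
    (addUniversal G).Adj none (some a) := by
  rw [addUniversal, SimpleGraph.fromRel_adj]
  exact ⟨by simp, Or.inl trivial⟩

lemma stuck_mirror (G : SimpleGraph V) (x : V) (vis : Finset V) :
    TronStuck (addUniversal G).Adj (some x) (insert none (vis.image some)) ↔
      TronStuck G.Adj x vis := by
  constructor
  · intro h w hw
    have := h (some w) ((addUniversal_adj_some_some G x w).2 hw)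
    simpa using this
  · intro h w hw
    match w with
    | none => simp
    | some y =>
      have : G.Adj x y := (addUniversal_adj_some_some G x y).1 hw
      simp [h y this]

lemma card_sdiff_insert_tron [Fintype V] {w : V} {vis : Finset V}
    (hw : w ∉ vis) :
    (Finset.univ \ insert w vis).card + 1 = (Finset.univ \ vis).card := by
  rw [Finset.sdiff_insert, Finset.card_erase_of_mem (by simp [hw])]
  have : 0 < (Finset.univ \ vis).card := Finset.card_pos.2 ⟨w, by simp [hw]⟩
  omega

lemma tronForceB_mono [Fintype V] (R : V → V → Prop) (P : ℕ → ℕ → Prop) :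
    ∀ f (t : Bool) (s : TronState V), 2 * (Finset.univ \ s.visited).card + 3 ≤ f →
      tronForceB R P f t s → tronForceB R P (f + 1) t s := by
  intro f
  induction f using Nat.strong_induction_on with
  | _ f IH =>
    intro t s hf h
    obtain ⟨g, rfl⟩ : ∃ g, f = g + 1 := ⟨f - 1, by omega⟩
    cases t
    · simp only [tronForceB] at h ⊢
      by_cases hB : TronStuck R s.posB s.visited
      · rw [if_pos hB] at h ⊢
        by_cases hA : TronStuck R s.posA s.visited
        · rwa [if_pos hA] at h ⊢
        · rw [if_neg hA] at h ⊢
          obtain ⟨g', rfl⟩ : ∃ g', g = g' + 1 := ⟨g - 1, by omega⟩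
          simp only [tronForceB] at h ⊢
          rw [if_neg hA] at h ⊢
          intro w hw hwvis
          have hcard := card_sdiff_insert_tron hwvis
          exact IH g' (by omega) false _ (by simp only; omega) (h w hw hwvis)
      · rw [if_neg hB] at h ⊢
        obtain ⟨w, hw, hwvis, h'⟩ := h
        have hcard := card_sdiff_insert_tron hwvis
        exact ⟨w, hw, hwvis, IH g (by omega) true _ (by simp only; omega) h'⟩
    · simp only [tronForceB] at h ⊢
      by_cases hA : TronStuck R s.posA s.visited
      · rw [if_pos hA] at h ⊢
        by_cases hB : TronStuck R s.posB s.visited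
        · rwa [if_pos hB] at h ⊢
        · rw [if_neg hB] at h ⊢
          obtain ⟨g', rfl⟩ : ∃ g', g = g' + 1 := ⟨g - 1, by omega⟩
          simp only [tronForceB] at h ⊢
          rw [if_neg hB] at h ⊢
          obtain ⟨w, hw, hwvis, h'⟩ := h
          have hcard := card_sdiff_insert_tron hwvis
          exact ⟨w, hw, hwvis, IH g' (by omega) true _ (by simp only; omega) h'⟩
      · rw [if_neg hA] at h ⊢
        intro w hw hwvis
        have hcard := card_sdiff_insert_tron hwvis
        exact IH g (by omega) false _ (by simp only; omega) (h w hw hwvis)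

lemma tron_sim (G : SimpleGraph V) (P P' : ℕ → ℕ → Prop)
    (hP : ∀ a b, P a b → P' (b + 1) a) :
    ∀ f (t : Bool) (s : TronState V),
      tronForceB G.Adj P f t s →
      tronForceA (addUniversal G).Adj P' f (!t)
        ⟨some s.posB, some s.posA, insert none (s.visited.image some),
         s.scoreB + 1, s.scoreA⟩ := by
  intro f
  induction f with
  | zero => intro t s h; exact hP _ _ h
  | succ g IH =>
    intro t s h
    cases t
    · -- G: Bob's turn (∃); F: Alice's turn (∃)
      simp only [tronForceB] at h
      simp only [Bool.not_false, tronForceA]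
      by_cases hB : TronStuck G.Adj s.posB s.visited
      · rw [if_pos hB] at h
        rw [if_pos ((stuck_mirror G _ _).2 hB)]
        by_cases hA : TronStuck G.Adj s.posA s.visited
        · rw [if_pos hA] at h
          rw [if_pos ((stuck_mirror G _ _).2 hA)]
          exact hP _ _ h
        · rw [if_neg hA] at h
          rw [if_neg (fun hc => hA ((stuck_mirror G _ _).1 hc))]
          exact IH true s h
      · rw [if_neg hB] at h
        rw [if_neg (fun hc => hB ((stuck_mirror G _ _).1 hc))]
        obtain ⟨w, hadj, hwvis, h'⟩ := h
        refine ⟨some w, (addUniversal_adj_some_some G _ _).2 hadj, by simpa using hwvis, ?_⟩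
        have hv : insert (some w) (insert none (s.visited.image some))
            = insert none ((insert w s.visited).image some) := by
          rw [Finset.image_insert, Finset.insert_comm]
        have := IH true ⟨s.posA, w, insert w s.visited, s.scoreA, s.scoreB + 1⟩ h'
        simp only [Bool.not_true] at this
        rw [hv]
        exact this
    · -- G: Alice's turn (∀); F: Bob's turn (∀)
      simp only [tronForceB] at h
      simp only [Bool.not_true, tronForceA]
      by_cases hA : TronStuck G.Adj s.posA s.visited
      · rw [if_pos hA] at h
        rw [if_pos ((stuck_mirror G _ _).2 hA)]
        by_cases hB : TronStuck G.Adj s.posB s.visited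
        · rw [if_pos hB] at h
          rw [if_pos ((stuck_mirror G _ _).2 hB)]
          exact hP _ _ h
        · rw [if_neg hB] at h
          rw [if_neg (fun hc => hB ((stuck_mirror G _ _).1 hc))]
          exact IH false s h
      · rw [if_neg hA] at h
        rw [if_neg (fun hc => hA ((stuck_mirror G _ _).1 hc))]
        intro w' hadj' hwvis'
        match w' with
        | none => exact absurd (Finset.mem_insert_self _ _) hwvis'
        | some w =>
          have hadj : G.Adj s.posA w := (addUniversal_adj_some_some G _ _).1 hadj'
          have hwvis : w ∉ s.visited := by
            intro hc
            exact hwvis' (by simp [hc])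
          have hv : insert (some w) (insert none (s.visited.image some))
              = insert none ((insert w s.visited).image some) := by
            rw [Finset.image_insert, Finset.insert_comm]
          have := IH false ⟨w, s.posB, insert w s.visited, s.scoreA + 1, s.scoreB⟩
            (h w hadj hwvis)
          simp only [Bool.not_false] at this
          rw [hv]
          exact this

end AuxTron

/-- If on `G` Bob can guarantee at least a tie, and `F` is
`G` plus a universal vertex `v`, then on `F` Alice, starting at `v` (whereupon
Bob's first move lands in `G` and the game continues as the game on `G` with
the roles exchanged), guarantees at least a tie; in particular Alice achieves
at least a tie on `F`. -/
theorem tron_universal_vertex_role_exchange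
    {V : Type} [Fintype V] [DecidableEq V] (G : SimpleGraph V)
    (htie : bobCanForce G (fun a b => a ≤ b)) :
    (∀ w : Option V, w ≠ none →
      tronForceA (addUniversal G).Adj (fun a b => b ≤ a)
        (tronFuel (Option V)) true (tronInit none w)) ∧
    aliceCanForce (addUniversal G) (fun a b => b ≤ a) := by
  have h1 : ∀ w : Option V, w ≠ none →
      tronForceA (addUniversal G).Adj (fun a b => b ≤ a)
        (tronFuel (Option V)) true (tronInit none w) := by
    intro w hw
    match w with
    | none => exact absurd rfl hw
    | some b =>
      obtain ⟨w₀, hne, hB⟩ := htie b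
      have hfuel : tronFuel (Option V) = (2 * Fintype.card V + 3) + 1 := by
        simp only [tronFuel, Fintype.card_option]; ring
      rw [hfuel]
      have hnotstuck : ¬ TronStuck (addUniversal G).Adj
          (tronInit none (some b) : TronState (Option V)).posA
          (tronInit none (some b) : TronState (Option V)).visited := by
        intro hc
        have := hc (some w₀) (addUniversal_adj_none G w₀)
        simp [tronInit] at this
        exact hne this
      rw [tronForceA]
      rw [if_neg hnotstuck]
      refine ⟨some w₀, addUniversal_adj_none G w₀, by simp [tronInit, hne], ?_⟩
      -- bring hB up to fuel 2n+3
      have hsub : ({b, w₀} : Finset V) ⊆ Finset.univ := Finset.subset_univ _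
      have hcard2 : ({b, w₀} : Finset V).card = 2 := by
        rw [Finset.card_insert_of_notMem (by simp [Ne.symm hne]), Finset.card_singleton]
      have hcardu : (Finset.univ \ ({b, w₀} : Finset V)).card + 2 = Fintype.card V := by
        rw [Finset.card_sdiff_of_subset hsub, hcard2]
        have huc : Finset.univ.card = Fintype.card V := rfl
        have h2 : 2 ≤ Finset.univ.card := hcard2 ▸ Finset.card_le_card hsub
        omega
      have hB' : tronForceB G.Adj (fun a b => a ≤ b) (2 * Fintype.card V + 3) true
          (tronInit b w₀) := by
        have hb : 2 * (Finset.univ \ (tronInit b w₀ : TronState V).visited).card + 3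
            ≤ tronFuel V := by
          show 2 * (Finset.univ \ ({b, w₀} : Finset V)).card + 3 ≤ 2 * Fintype.card V + 2
          omega
        have h2 := tronForceB_mono G.Adj (fun a b => a ≤ b) (tronFuel V) true
          (tronInit b w₀) hb hB
        have heq : tronFuel V + 1 = 2 * Fintype.card V + 3 := rfl
        rw [heq] at h2
        exact h2
      have hsim := tron_sim G (fun a b => a ≤ b) (fun a b => b ≤ a)
        (fun a b hab => by omega) (2 * Fintype.card V + 3) true (tronInit b w₀) hB'
      simp only [Bool.not_true] at hsim
      have hv : insert (some w₀) ({none, some b} : Finset (Option V))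
          = insert none (Finset.image some ({b, w₀} : Finset V)) := by
        ext x
        simp only [Finset.mem_insert, Finset.mem_image, Finset.mem_singleton]
        constructor
        · rintro (rfl | rfl | rfl)
          · exact Or.inr ⟨w₀, Or.inr rfl, rfl⟩
          · exact Or.inl rfl
          · exact Or.inr ⟨b, Or.inl rfl, rfl⟩
        · rintro (rfl | ⟨y, rfl | rfl, rfl⟩)
          · exact Or.inr (Or.inl rfl)
          · exact Or.inr (Or.inr rfl)
          · exact Or.inl rfl
      show tronForceA (addUniversal G).Adj (fun a b => b ≤ a) (2 * Fintype.card V + 3) false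
        ⟨some w₀, some b, insert (some w₀) ({none, some b} : Finset (Option V)), 1 + 1, 1⟩
      have hstate : (⟨some w₀, some b,
            insert (some w₀) ({none, some b} : Finset (Option V)), 1 + 1, 1⟩ :
            TronState (Option V))
          = ⟨some w₀, some b,
            insert none (Finset.image some ({b, w₀} : Finset V)), 1 + 1, 1⟩ := by
        rw [hv]
      rw [hstate]
      exact hsim
  exact ⟨h1, none, h1⟩
end
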